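/- arXiv:2005.05200 — 2 statements merged into one kernel-verified Lean document; each statement's English description precedes it below -/
import Mathlib

section
/- Let u₀ be strictly increasing on [a,b] with u₀(a) = −1, u₀(b) = 1 and unique zero x₁, and assume log u₀ ∉ L¹(x₁, b), i.e. ∫_{x₁}^b |log u₀(x)| dx = ∞. Let u be the unique classical solution of the limit problem (2.7). Then ∫_{x₁}^b log u(x,t) ψ(x) dx = −∞ for all t ∈ (0,T] and every ψ ∈ C_c¹([x₁,b]) with ψ(x₁) = 1 and ψ' ≤ 0; consequently τ₁⁺ = ∞, i.e. the one-sided derivative u_x(x₁⁺, t) = 0 for all t ∈ (0,T]. -/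
open Set Filter MeasureTheory Topology

/-- Partial derivative in `x` of `u(x,t)`. -/
noncomputable def pdx (u : ℝ → ℝ → ℝ) (x t : ℝ) : ℝ := deriv (fun y => u y t) x

/-- Second partial derivative in `x` of `u(x,t)`. -/
noncomputable def pdxx (u : ℝ → ℝ → ℝ) (x t : ℝ) : ℝ := deriv (fun y => pdx u y t) x

/-- Partial derivative in `t` of `u(x,t)`, one-sided at `t = T`. -/
noncomputable def pdtW (T : ℝ) (u : ℝ → ℝ → ℝ) (x t : ℝ) : ℝ :=
  derivWithin (fun s => u x s) (Set.Iic T) t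

/-- `Q = (a,b) × (0,T]`. -/
def QT (a b T : ℝ) : Set (ℝ × ℝ) := Set.Ioo a b ×ˢ Set.Ioc 0 T

/-- `N = N₀ × [0,T]`. -/
def NSet (N₀ : Set ℝ) (T : ℝ) : Set (ℝ × ℝ) := N₀ ×ˢ Set.Icc 0 T

/-- Condition (2.8): `u₀` is continuous, `u₀(a) = -1`, `u₀(b) = 1`, the zeros of `u₀`
form the finite set `N₀ ⊆ (a,b)`, and `u₀` changes sign at each of its zeros. -/
structure InitData (a b : ℝ) (N₀ : Set ℝ) (u₀ : ℝ → ℝ) : Prop where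
  cont : ContinuousOn u₀ (Set.Icc a b)
  bdry_a : u₀ a = -1
  bdry_b : u₀ b = 1
  fin : N₀.Finite
  sub : N₀ ⊆ Set.Ioo a b
  zeros : ∀ x ∈ Set.Icc a b, (u₀ x = 0 ↔ x ∈ N₀)
  sign_change : ∀ x ∈ N₀, ∀ δ > 0,
    ∃ y ∈ Set.Ioo (x - δ) x, ∃ z ∈ Set.Ioo x (x + δ), u₀ y * u₀ z < 0

/-- A classical solution of the limit problem (2.7): `u ∈ C(Q̄)` vanishing exactly on `N`,
`C^{2,1}` on `Q ∖ N`, with boundary values `∓1`, initial value `u₀`, satisfying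
`u_t = |u| u_xx + u(1-|u|)` on `Q ∖ N`. -/
structure IsClassicalSol (a b T : ℝ) (N₀ : Set ℝ) (u₀ : ℝ → ℝ) (u : ℝ → ℝ → ℝ) : Prop where
  cont : ContinuousOn (fun p : ℝ × ℝ => u p.1 p.2) (Set.Icc a b ×ˢ Set.Icc 0 T)
  zero_iff : ∀ x ∈ Set.Icc a b, ∀ t ∈ Set.Icc 0 T, (u x t = 0 ↔ x ∈ N₀)
  diff_x : ∀ p ∈ QT a b T \ NSet N₀ T, DifferentiableAt ℝ (fun y => u y p.2) p.1
  diff_xx : ∀ p ∈ QT a b T \ NSet N₀ T, DifferentiableAt ℝ (fun y => pdx u y p.2) p.1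
  diff_t : ∀ p ∈ QT a b T \ NSet N₀ T,
    DifferentiableWithinAt ℝ (fun s => u p.1 s) (Set.Iic T) p.2
  cont_x : ContinuousOn (fun p : ℝ × ℝ => pdx u p.1 p.2) (QT a b T \ NSet N₀ T)
  cont_xx : ContinuousOn (fun p : ℝ × ℝ => pdxx u p.1 p.2) (QT a b T \ NSet N₀ T)
  cont_t : ContinuousOn (fun p : ℝ × ℝ => pdtW T u p.1 p.2) (QT a b T \ NSet N₀ T)
  bdry_a : ∀ t ∈ Set.Ioc 0 T, u a t = -1
  bdry_b : ∀ t ∈ Set.Ioc 0 T, u b t = 1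
  init : ∀ x ∈ Set.Ioo a b, u x 0 = u₀ x
  pde : ∀ p ∈ QT a b T \ NSet N₀ T,
    pdtW T u p.1 p.2 = |u p.1 p.2| * pdxx u p.1 p.2 + u p.1 p.2 * (1 - |u p.1 p.2|)

open scoped ENNReal

section Helpers

variable {a b T x₁ : ℝ} {u₀ : ℝ → ℝ} {u : ℝ → ℝ → ℝ}

/-- membership in `QT \ NSet` -/
lemma mem_QTN (hx : x ∈ Set.Ioo a b) (hxne : x ≠ x₁) (ht : t ∈ Set.Ioc 0 T) :
    ((x, t) : ℝ × ℝ) ∈ QT a b T \ NSet {x₁} T := by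
  refine ⟨⟨hx, ht⟩, ?_⟩
  intro hmem
  exact hxne (by simpa [NSet] using hmem.1)

/-- slice continuity in x -/
lemma cont_slice_x (hu : IsClassicalSol a b T {x₁} u₀ u) {t : ℝ} (ht : t ∈ Set.Icc 0 T) :
    ContinuousOn (fun x => u x t) (Set.Icc a b) := by
  have : ContinuousOn ((fun p : ℝ × ℝ => u p.1 p.2) ∘ fun x => (x, t)) (Set.Icc a b) := by
    refine hu.cont.comp (by fun_prop) ?_
    intro x hx; exact ⟨hx, ht⟩
  exact this

/-- slice continuity in t -/
lemma cont_slice_t (hu : IsClassicalSol a b T {x₁} u₀ u) {x : ℝ} (hx : x ∈ Set.Icc a b) :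
    ContinuousOn (fun t => u x t) (Set.Icc 0 T) := by
  have : ContinuousOn ((fun p : ℝ × ℝ => u p.1 p.2) ∘ fun t => (x, t)) (Set.Icc 0 T) := by
    refine hu.cont.comp (by fun_prop) ?_
    intro t ht; exact ⟨hx, ht⟩
  exact this

/-- positivity of u right of x₁ -/
lemma upos (hab : a < b) (hx₁ : x₁ ∈ Set.Ioo a b) (hu : IsClassicalSol a b T {x₁} u₀ u)
    {x t : ℝ} (hx : x ∈ Set.Ioc x₁ b) (ht : t ∈ Set.Ioc 0 T) : 0 < u x t := by
  have hxab : x ∈ Set.Icc a b := ⟨le_of_lt (lt_of_lt_of_le hx₁.1 (le_of_lt hx.1)), hx.2⟩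
  have htI : t ∈ Set.Icc 0 T := ⟨le_of_lt ht.1, ht.2⟩
  have hne : u x t ≠ 0 := by
    intro h0
    have := (hu.zero_iff x hxab t htI).1 h0
    simp only [Set.mem_singleton_iff] at this
    exact absurd this (ne_of_gt hx.1)
  rcases lt_or_gt_of_ne hne with hneg | hpos
  · exfalso
    have hb1 : u b t = 1 := hu.bdry_b t ht
    have hcont : ContinuousOn (fun y => u y t) (Set.Icc x b) :=
      (cont_slice_x hu htI).mono (Set.Icc_subset_Icc hxab.1 le_rfl)
    have h0mem : (0:ℝ) ∈ Set.Icc (u x t) (u b t) := by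
      constructor <;> simp [hb1, le_of_lt hneg]
    obtain ⟨z, hz, hz0⟩ := intermediate_value_Icc hx.2 hcont h0mem
    have hzab : z ∈ Set.Icc a b := ⟨le_trans hxab.1 hz.1, hz.2⟩
    have := (hu.zero_iff z hzab t htI).1 hz0
    simp only [Set.mem_singleton_iff] at this
    subst this
    exact absurd hz.1 (not_le.mpr hx.1)
  · exact hpos

/-- u vanishes on the segment above x₁ -/
lemma u_x₁_zero (hx₁ : x₁ ∈ Set.Ioo a b) (hu : IsClassicalSol a b T {x₁} u₀ u)
    {t : ℝ} (ht : t ∈ Set.Icc 0 T) : u x₁ t = 0 :=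
  (hu.zero_iff x₁ ⟨le_of_lt hx₁.1, le_of_lt hx₁.2⟩ t ht).2 rfl

/-- global bound for u on the rectangle -/
lemma u_bound (hu : IsClassicalSol a b T {x₁} u₀ u) :
    ∃ M : ℝ, 1 ≤ M ∧ ∀ x ∈ Set.Icc a b, ∀ t ∈ Set.Icc 0 T, |u x t| ≤ M := by
  obtain ⟨C, hC⟩ := (IsCompact.prod isCompact_Icc isCompact_Icc).exists_bound_of_continuousOn hu.cont
  refine ⟨max C 1, le_max_right _ _, fun x hx t ht => ?_⟩
  exact le_trans (by simpa using hC (x, t) ⟨hx, ht⟩) (le_max_left _ _)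

/-- strip smallness: u is < 1/2 uniformly in time near x₁ -/
lemma u_strip (hab : a < b) (hT : 0 < T) (hx₁ : x₁ ∈ Set.Ioo a b)
    (hu : IsClassicalSol a b T {x₁} u₀ u) :
    ∃ d : ℝ, 0 < d ∧ x₁ + d < b ∧
      ∀ x ∈ Set.Icc a b, ∀ t ∈ Set.Icc 0 T, |x - x₁| ≤ d → |u x t| < 1/2 := by
  have hcomp : IsCompact (Set.Icc a b ×ˢ Set.Icc 0 T) := IsCompact.prod isCompact_Icc isCompact_Icc
  have huc : UniformContinuousOn (fun p : ℝ × ℝ => u p.1 p.2) (Set.Icc a b ×ˢ Set.Icc 0 T) :=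
    hcomp.uniformContinuousOn_of_continuous hu.cont
  rw [Metric.uniformContinuousOn_iff] at huc
  obtain ⟨δ, hδ, hδ'⟩ := huc (1/2) (by norm_num)
  have hbx : 0 < b - x₁ := by linarith [hx₁.2]
  refine ⟨min (δ/2) ((b - x₁)/2), lt_min (by positivity) (by positivity), ?_, ?_⟩
  · have : (b - x₁)/2 < b - x₁ := by
      have : 0 < b - x₁ := by linarith [hx₁.2]
      linarith
    have := min_le_right (δ/2) ((b - x₁)/2)
    linarith
  · intro x hx t ht hdist
    have hx₁m : (x₁, t) ∈ Set.Icc a b ×ˢ Set.Icc 0 T :=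
      ⟨⟨le_of_lt hx₁.1, le_of_lt hx₁.2⟩, ht⟩
    have hxm : (x, t) ∈ Set.Icc a b ×ˢ Set.Icc 0 T := ⟨hx, ht⟩
    have hd : dist ((x,t) : ℝ × ℝ) ((x₁,t) : ℝ × ℝ) < δ := by
      rw [Prod.dist_eq]
      simp only [dist_self]
      have h1 : dist x x₁ < δ := by
        rw [Real.dist_eq]
        have h2 := min_le_left (δ/2) ((b - x₁)/2)
        have : |x - x₁| ≤ δ/2 := le_trans hdist h2
        linarith
      exact max_lt h1 hδ
    have := hδ' (x, t) hxm (x₁, t) hx₁m hd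
    have hz : u x₁ t = 0 := u_x₁_zero hx₁ hu ht
    rw [Real.dist_eq, hz, sub_zero] at this
    exact this

end Helpers


section GenHelpers

/-- splitting an infinite lintegral: the mass must sit near the left endpoint -/
lemma lint_split_top {f : ℝ → ℝ≥0∞} {x₁ c ρ : ℝ} 
    (h : ∫⁻ x in Set.Ioo x₁ c, f x = ⊤) {C : ℝ≥0∞} (hC : C ≠ ⊤)
    (hb : ∀ x ∈ Set.Ico (x₁+ρ) c, f x ≤ C) :
    ∫⁻ x in Set.Ioo x₁ (x₁+ρ), f x = ⊤ := by
  by_contra hne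
  have hsub : Set.Ioo x₁ c ⊆ Set.Ioo x₁ (x₁+ρ) ∪ Set.Ico (x₁+ρ) c := by
    intro x hx
    rcases lt_or_ge x (x₁+ρ) with h'|h'
    · exact Or.inl ⟨hx.1, h'⟩
    · exact Or.inr ⟨h', hx.2⟩
  have h1 : (⊤:ℝ≥0∞) ≤ ∫⁻ x in Set.Ioo x₁ (x₁+ρ) ∪ Set.Ico (x₁+ρ) c, f x := by
    rw [← h]; exact lintegral_mono_set hsub
  have h2 := le_trans h1 (lintegral_union_le f _ _)
  have h3 : ∫⁻ x in Set.Ico (x₁+ρ) c, f x ≤ C * volume (Set.Ico (x₁+ρ) c) := by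
    calc ∫⁻ x in Set.Ico (x₁+ρ) c, f x ≤ ∫⁻ _ in Set.Ico (x₁+ρ) c, C :=
          setLIntegral_mono' measurableSet_Ico hb
    _ = C * volume (Set.Ico (x₁+ρ) c) := setLIntegral_const _ _
  have hfin : ∫⁻ x in Set.Ico (x₁+ρ) c, f x < ⊤ := by
    refine lt_of_le_of_lt h3 (ENNReal.mul_lt_top ?_ ?_)
    · exact hC.lt_top
    · rw [Real.volume_Ico]; exact ENNReal.ofReal_lt_top
  have : (⊤:ℝ≥0∞) < ⊤ := by
    refine lt_of_le_of_lt h2 (ENNReal.add_lt_top.2 ⟨?_, hfin⟩)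
    exact Ne.lt_top hne
  exact absurd this (lt_irrefl _)

/-- exhausting an lintegral over `Ioo A B` from the right -/
lemma lint_sup_bound {f : ℝ → ℝ≥0∞} {A B : ℝ} {C : ℝ≥0∞}
    (hm : AEMeasurable f (volume.restrict (Set.Ioo A B)))
    (h : ∀ ε : ℝ, 0 < ε → ∫⁻ x in Set.Ioo (A+ε) B, f x ≤ C) :
    ∫⁻ x in Set.Ioo A B, f x ≤ C := by
  set S : ℕ → Set ℝ := fun n => Set.Ioo (A + 1/(n+1)) B with hS
  have hSsub : ∀ n, S n ⊆ Set.Ioo A B := by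
    intro n x hx
    refine ⟨lt_trans ?_ hx.1, hx.2⟩
    have : (0:ℝ) < 1/((n:ℝ)+1) := by positivity
    linarith
  have hmono : Monotone S := by
    intro m n hmn x hx
    refine ⟨lt_of_le_of_lt ?_ hx.1, hx.2⟩
    have h1 : (1:ℝ)/((n:ℝ)+1) ≤ 1/((m:ℝ)+1) := by
      apply one_div_le_one_div_of_le (by positivity)
      have : (m:ℝ) ≤ (n:ℝ) := Nat.cast_le.2 hmn
      linarith
    linarith
  have key : ∫⁻ x in Set.Ioo A B, f x ≤ ⨆ n, ∫⁻ x in S n, f x := by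
    rw [← lintegral_indicator measurableSet_Ioo]
    have hpt : ∀ x, (Set.Ioo A B).indicator f x ≤ ⨆ n, (S n).indicator f x := by
      intro x
      by_cases hx : x ∈ Set.Ioo A B
      · rw [Set.indicator_of_mem hx]
        obtain ⟨n, hn⟩ := exists_nat_one_div_lt (show (0:ℝ) < x - A by linarith [hx.1])
        refine le_iSup_of_le n ?_
        rw [Set.indicator_of_mem (show x ∈ S n from ⟨by linarith [hn], hx.2⟩)]
      · rw [Set.indicator_of_notMem hx]; exact zero_le
    calc ∫⁻ x, (Set.Ioo A B).indicator f x ≤ ∫⁻ x, ⨆ n, (S n).indicator f x :=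
          lintegral_mono hpt
    _ = ⨆ n, ∫⁻ x, (S n).indicator f x := by
        refine lintegral_iSup' ?_ (ae_of_all _ ?_)
        · intro n
          exact (aemeasurable_indicator_iff measurableSet_Ioo).2
            (hm.mono_measure (Measure.restrict_mono (hSsub n) le_rfl))
        · intro x m n hmn
          exact Set.indicator_le_indicator_of_subset (hmono hmn) (fun a => zero_le) x
    _ = ⨆ n, ∫⁻ x in S n, f x := by
        refine iSup_congr (fun n => ?_)
        exact lintegral_indicator measurableSet_Ioo f
  refine le_trans key (iSup_le (fun n => h _ (by positivity)))

/-- elementary: `-log z ≤ 2 z^{-1/2}` for `z > 0` -/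
lemma neg_log_le_rpow {z : ℝ} (hz : 0 < z) : -Real.log z ≤ 2 * z ^ (-(1/2) : ℝ) := by
  have hw : (0:ℝ) < z ^ ((1/2):ℝ) := Real.rpow_pos_of_pos hz _
  have h1 : Real.log ((z ^ ((1/2):ℝ))⁻¹) ≤ (z ^ ((1/2):ℝ))⁻¹ - 1 :=
    Real.log_le_sub_one_of_pos (by positivity)
  rw [Real.log_inv, Real.log_rpow hz] at h1
  have h2 : z ^ (-(1/2) : ℝ) = (z ^ ((1/2):ℝ))⁻¹ := Real.rpow_neg (le_of_lt hz) _
  rw [h2]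
  have h3 : (0:ℝ) < (z ^ ((1/2):ℝ))⁻¹ := by positivity
  nlinarith [h1, h3]

/-- sequence c/(k+2) tends to zero -/
lemma tendsto_c_div (c : ℝ) : Tendsto (fun k : ℕ => c / ((k:ℝ)+2)) atTop (𝓝 0) := by
  apply Tendsto.div_atTop (tendsto_const_nhds)
  exact tendsto_atTop_add_const_right _ 2 tendsto_natCast_atTop_atTop

/-- the cutoff function -/
lemma exists_phi (x₁ δ₁ δ₂ : ℝ) (h1 : 0 < δ₁) (h12 : δ₁ < δ₂) :
    ∃ φ φd φdd : ℝ → ℝ, (∀ x, HasDerivAt φ (φd x) x) ∧ (∀ x, HasDerivAt φd (φdd x) x) ∧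
      Continuous φ ∧ Continuous φd ∧ Continuous φdd ∧
      (∀ x, x ≤ x₁ + δ₁ → φ x = 1) ∧ (∀ x, x₁ + δ₂ ≤ x → φ x = 0) ∧
      (∀ x, 0 ≤ φ x) ∧ (∀ x, φ x ≤ 1) ∧
      (∀ x, x < x₁ + δ₁ → φd x = 0) ∧ (∀ x, x₁ + δ₂ < x → φd x = 0) := by
  set g : ℝ → ℝ := fun x => (x₁ + δ₂ - x)/(δ₂ - δ₁) with hg
  set φ : ℝ → ℝ := fun x => Real.smoothTransition (g x) with hφ
  have hsm : ContDiff ℝ (↑(⊤:ℕ∞)) φ := by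
    apply Real.smoothTransition.contDiff.comp
    apply ContDiff.div_const
    exact contDiff_const.sub contDiff_id
  obtain ⟨hdiff, hsm1⟩ := contDiff_infty_iff_deriv.1 hsm
  obtain ⟨hdiff2, hsm2⟩ := contDiff_infty_iff_deriv.1 hsm1
  have hone : ∀ x, x ≤ x₁ + δ₁ → φ x = 1 := by
    intro x hx
    apply Real.smoothTransition.one_of_one_le
    rw [hg]
    rw [le_div_iff₀ (by linarith)]
    simp only [one_mul]
    linarith
  have hzero : ∀ x, x₁ + δ₂ ≤ x → φ x = 0 := by
    intro x hx
    apply Real.smoothTransition.zero_of_nonpos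
    apply div_nonpos_of_nonpos_of_nonneg <;> linarith
  refine ⟨φ, deriv φ, deriv (deriv φ), 
    fun x => (hdiff x).hasDerivAt, fun x => (hdiff2 x).hasDerivAt,
    hsm.continuous, hsm1.continuous, hsm2.continuous, 
    hone, hzero, fun x => Real.smoothTransition.nonneg _, fun x => Real.smoothTransition.le_one _,
    ?_, ?_⟩
  · intro x hx
    have hev : φ =ᶠ[𝓝 x] (fun _ => 1) := by
      filter_upwards [Iio_mem_nhds hx] with y hy
      exact hone y (le_of_lt hy)
    rw [hev.deriv_eq, deriv_const]
  · intro x hx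
    have hev : φ =ᶠ[𝓝 x] (fun _ => 0) := by
      filter_upwards [Ioi_mem_nhds hx] with y hy
      exact hzero y (le_of_lt hy)
    rw [hev.deriv_eq, deriv_const]

end GenHelpers

section FTC

variable {a b T x₁ : ℝ} {u₀ : ℝ → ℝ} {u : ℝ → ℝ → ℝ}

/-- fundamental theorem of calculus in time for log u -/
lemma time_ftc (hu : IsClassicalSol a b T {x₁} u₀ u) (hx₁ : x₁ ∈ Set.Ioo a b)
    {x s t : ℝ} (hx : x ∈ Set.Ioo x₁ b) (hs : 0 < s) (hst : s ≤ t) (htT : t ≤ T) :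
    ∫ τ in s..t, (pdxx u x τ + (1 - u x τ)) = Real.log (u x t) - Real.log (u x s) := by
  have hxab : x ∈ Set.Ioo a b := ⟨lt_trans hx₁.1 hx.1, hx.2⟩
  have hxIcc : x ∈ Set.Icc a b := ⟨le_of_lt hxab.1, le_of_lt hxab.2⟩
  have hpos : ∀ τ ∈ Set.Icc s t, 0 < u x τ := fun τ hτ =>
    upos (lt_trans hx₁.1 hx₁.2) hx₁ hu ⟨hx.1, le_of_lt hx.2⟩ ⟨lt_of_lt_of_le hs hτ.1, le_trans hτ.2 htT⟩
  have hmem : ∀ τ ∈ Set.Ioo s t, ((x, τ) : ℝ × ℝ) ∈ QT a b T \ NSet {x₁} T := by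
    intro τ hτ
    exact mem_QTN hxab (ne_of_gt hx.1) ⟨lt_trans hs hτ.1, le_trans (le_of_lt hτ.2) htT⟩
  apply intervalIntegral.integral_eq_sub_of_hasDeriv_right_of_le hst
  · -- continuity of log u x ·
    apply ContinuousOn.log
    · exact (cont_slice_t hu hxIcc).mono
        (Set.Icc_subset_Icc (le_of_lt hs) htT)
    · intro τ hτ; exact ne_of_gt (hpos τ hτ)
  · -- derivative
    intro τ hτ
    have hmτ := hmem τ hτ
    have hτT : τ < T := lt_of_lt_of_le hτ.2 htT
    have hIic : Set.Iic T ∈ 𝓝 τ := Iic_mem_nhds hτT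
    have hda : DifferentiableAt ℝ (fun σ => u x σ) τ :=
      (hu.diff_t _ hmτ).differentiableAt hIic
    have hpdtW : pdtW T u x τ = deriv (fun σ => u x σ) τ := derivWithin_of_mem_nhds hIic
    have hd : HasDerivAt (fun σ => u x σ) (pdtW T u x τ) τ := by
      rw [hpdtW]; exact hda.hasDerivAt
    have hτpos : 0 < u x τ := hpos τ ⟨le_of_lt hτ.1, le_of_lt hτ.2⟩
    have hlog : HasDerivAt (fun σ => Real.log (u x σ)) (pdtW T u x τ / u x τ) τ :=
      hd.log (ne_of_gt hτpos)
    have hpde := hu.pde _ hmτ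
    simp only at hpde
    have habs : |u x τ| = u x τ := abs_of_pos hτpos
    rw [hpde, habs] at hlog
    have heq : (u x τ * pdxx u x τ + u x τ * (1 - u x τ)) / u x τ
        = pdxx u x τ + (1 - u x τ) := by
      field_simp
    rw [heq] at hlog
    exact hlog.hasDerivWithinAt
  · -- integrability
    apply ContinuousOn.intervalIntegrable
    rw [Set.uIcc_of_le hst]
    apply ContinuousOn.add
    · have : ContinuousOn ((fun p : ℝ × ℝ => pdxx u p.1 p.2) ∘ fun τ => (x, τ)) (Set.Icc s t) := by
        refine hu.cont_xx.comp (by fun_prop) ?_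
        intro τ hτ
        exact mem_QTN hxab (ne_of_gt hx.1) ⟨lt_of_lt_of_le hs hτ.1, le_trans hτ.2 htT⟩
      exact this
    · exact ContinuousOn.sub continuousOn_const
        ((cont_slice_t hu hxIcc).mono (Set.Icc_subset_Icc (le_of_lt hs) htT))

/-- slice continuity of pdx in x at fixed time -/
lemma cont_pdx_slice (hu : IsClassicalSol a b T {x₁} u₀ u) (hx₁ : x₁ ∈ Set.Ioo a b)
    {τ A B : ℝ} (hA : x₁ < A) (hB : B < b) (hτ : τ ∈ Set.Ioc 0 T) :
    ContinuousOn (fun x => pdx u x τ) (Set.Icc A B) := by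
  have : ContinuousOn ((fun p : ℝ × ℝ => pdx u p.1 p.2) ∘ fun x => (x, τ)) (Set.Icc A B) := by
    refine hu.cont_x.comp (by fun_prop) ?_
    intro x hx
    exact mem_QTN ⟨lt_trans hx₁.1 (lt_of_lt_of_le hA hx.1), lt_of_le_of_lt hx.2 hB⟩
      (ne_of_gt (lt_of_lt_of_le hA hx.1)) hτ
  exact this

/-- slice continuity of pdxx in x at fixed time -/
lemma cont_pdxx_slice (hu : IsClassicalSol a b T {x₁} u₀ u) (hx₁ : x₁ ∈ Set.Ioo a b)
    {τ A B : ℝ} (hA : x₁ < A) (hB : B < b) (hτ : τ ∈ Set.Ioc 0 T) :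
    ContinuousOn (fun x => pdxx u x τ) (Set.Icc A B) := by
  have : ContinuousOn ((fun p : ℝ × ℝ => pdxx u p.1 p.2) ∘ fun x => (x, τ)) (Set.Icc A B) := by
    refine hu.cont_xx.comp (by fun_prop) ?_
    intro x hx
    exact mem_QTN ⟨lt_trans hx₁.1 (lt_of_lt_of_le hA hx.1), lt_of_le_of_lt hx.2 hB⟩
      (ne_of_gt (lt_of_lt_of_le hA hx.1)) hτ
  exact this

/-- FTC in space -/
lemma x_ftc (hu : IsClassicalSol a b T {x₁} u₀ u) (hx₁ : x₁ ∈ Set.Ioo a b)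
    {τ A B : ℝ} (hA : x₁ < A) (hAB : A ≤ B) (hB : B < b) (hτ : τ ∈ Set.Ioc 0 T) :
    ∫ x in A..B, pdx u x τ = u B τ - u A τ := by
  apply intervalIntegral.integral_eq_sub_of_hasDerivAt
  · intro x hx
    rw [Set.uIcc_of_le hAB] at hx
    have hmem := mem_QTN (show x ∈ Set.Ioo a b from
      ⟨lt_trans hx₁.1 (lt_of_lt_of_le hA hx.1), lt_of_le_of_lt hx.2 hB⟩)
      (ne_of_gt (lt_of_lt_of_le hA hx.1)) hτ
    exact (hu.diff_x _ hmem).hasDerivAt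
  · apply ContinuousOn.intervalIntegrable
    rw [Set.uIcc_of_le hAB]
    exact cont_pdx_slice hu hx₁ hA hB hτ

/-- integration by parts in space -/
lemma ibp_x (hu : IsClassicalSol a b T {x₁} u₀ u) (hx₁ : x₁ ∈ Set.Ioo a b)
    {τ A B : ℝ} (hA : x₁ < A) (hAB : A ≤ B) (hB : B < b) (hτ : τ ∈ Set.Ioc 0 T)
    {φ φd φdd : ℝ → ℝ}
    (hφd : ∀ x, HasDerivAt φ (φd x) x) (hφd2 : ∀ x, HasDerivAt φd (φdd x) x)
    (hφdc : Continuous φd) (hφddc : Continuous φdd)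
    (hφA : φ A = 1) (hφB : φ B = 0) (hφdA : φd A = 0) (hφdB : φd B = 0) :
    ∫ x in A..B, φ x * pdxx u x τ
      = -(pdx u A τ) + ∫ x in A..B, φdd x * u x τ := by
  have hderiv_u : ∀ x ∈ Set.uIcc A B, HasDerivAt (fun y => u y τ) (pdx u x τ) x := by
    intro x hx
    rw [Set.uIcc_of_le hAB] at hx
    exact (hu.diff_x _ (mem_QTN
      ⟨lt_trans hx₁.1 (lt_of_lt_of_le hA hx.1), lt_of_le_of_lt hx.2 hB⟩
      (ne_of_gt (lt_of_lt_of_le hA hx.1)) hτ)).hasDerivAt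
  have hderiv_pdx : ∀ x ∈ Set.uIcc A B, HasDerivAt (fun y => pdx u y τ) (pdxx u x τ) x := by
    intro x hx
    rw [Set.uIcc_of_le hAB] at hx
    exact (hu.diff_xx _ (mem_QTN
      ⟨lt_trans hx₁.1 (lt_of_lt_of_le hA hx.1), lt_of_le_of_lt hx.2 hB⟩
      (ne_of_gt (lt_of_lt_of_le hA hx.1)) hτ)).hasDerivAt
  have hint_pdx : IntervalIntegrable (fun x => pdx u x τ) MeasureTheory.volume A B := by
    apply ContinuousOn.intervalIntegrable
    rw [Set.uIcc_of_le hAB]; exact cont_pdx_slice hu hx₁ hA hB hτ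
  have hint_pdxx : IntervalIntegrable (fun x => pdxx u x τ) MeasureTheory.volume A B := by
    apply ContinuousOn.intervalIntegrable
    rw [Set.uIcc_of_le hAB]; exact cont_pdxx_slice hu hx₁ hA hB hτ
  have h1 : ∫ x in A..B, φ x * pdxx u x τ
      = φ B * pdx u B τ - φ A * pdx u A τ - ∫ x in A..B, φd x * pdx u x τ :=
    intervalIntegral.integral_mul_deriv_eq_deriv_mul
      (fun x _ => hφd x) hderiv_pdx (hφdc.intervalIntegrable _ _) hint_pdxx
  have h2 : ∫ x in A..B, φd x * pdx u x τ
      = φd B * u B τ - φd A * u A τ - ∫ x in A..B, φdd x * u x τ :=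
    intervalIntegral.integral_mul_deriv_eq_deriv_mul
      (fun x _ => hφd2 x) hderiv_u (hφddc.intervalIntegrable _ _) hint_pdx
  rw [h1, h2, hφA, hφB, hφdA, hφdB]
  ring

end FTC

section GoodEps

variable {a b T x₁ : ℝ} {u₀ : ℝ → ℝ} {u : ℝ → ℝ → ℝ}

/-- there exist arbitrarily small ε with nonnegative time-integral of u_x at x₁+ε -/
lemma good_eps (hu : IsClassicalSol a b T {x₁} u₀ u) (hx₁ : x₁ ∈ Set.Ioo a b)
    {s t η : ℝ} (hs : 0 < s) (hst : s < t) (htT : t ≤ T) (hη : 0 < η) (hηb : x₁ + η < b) :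
    ∃ ε : ℝ, 0 < ε ∧ ε < η ∧ 0 ≤ ∫ τ in Set.Ioc s t, pdx u (x₁+ε) τ := by
  by_contra hcon
  push_neg at hcon
  set c : ℝ → ℝ := fun ρ => ∫ τ in Set.Ioc s t, u (x₁+ρ) τ with hc
  have hab : a < b := lt_trans hx₁.1 hx₁.2
  obtain ⟨M, hM1, hM⟩ := u_bound hu
  have hmemx : ∀ ρ : ℝ, 0 ≤ ρ → ρ ≤ η → x₁ + ρ ∈ Set.Icc a b :=
    fun ρ h0 h1 => ⟨by linarith [hx₁.1], by linarith⟩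
  have hslice : ∀ ρ : ℝ, 0 ≤ ρ → ρ ≤ η →
      ContinuousOn (fun τ => u (x₁+ρ) τ) (Set.Icc s t) := by
    intro ρ h0 h1
    exact (cont_slice_t hu (hmemx ρ h0 h1)).mono
      (Set.Icc_subset_Icc (le_of_lt hs) htT)
  have hIntSlice : ∀ ρ : ℝ, 0 ≤ ρ → ρ ≤ η →
      MeasureTheory.IntegrableOn (fun τ => u (x₁+ρ) τ) (Set.Ioc s t) := by
    intro ρ h0 h1
    exact ((hslice ρ h0 h1).integrableOn_compact isCompact_Icc).mono_set Set.Ioc_subset_Icc_self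
  -- step 1 : c (η/2) > 0
  have hpos_c : 0 < c (η/2) := by
    obtain ⟨τ₀, hτ₀, hmin⟩ := isCompact_Icc.exists_isMinOn (Set.nonempty_Icc.2 (le_of_lt hst))
      (hslice (η/2) (by positivity) (by linarith))
    have hm : 0 < u (x₁+η/2) τ₀ :=
      upos hab hx₁ hu ⟨by linarith, by linarith⟩
        ⟨lt_of_lt_of_le hs hτ₀.1, le_trans hτ₀.2 htT⟩
    have hge : u (x₁+η/2) τ₀ * (MeasureTheory.volume (Set.Ioc s t)).toReal ≤ c (η/2) := by
      rw [mul_comm, ← smul_eq_mul]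
      apply MeasureTheory.setIntegral_ge_of_const_le measurableSet_Ioc
        (by rw [Real.volume_Ioc]; exact ENNReal.ofReal_ne_top)
        (fun τ hτ => hmin (Set.Ioc_subset_Icc_self hτ))
        (hIntSlice (η/2) (by positivity) (by linarith))
    have hvol : (MeasureTheory.volume (Set.Ioc s t)).toReal = t - s := by
      rw [Real.volume_Ioc, ENNReal.toReal_ofReal (by linarith)]
    rw [hvol] at hge
    nlinarith
  -- step 2 + 3 : c (η/2) ≤ c ρ' for all 0 < ρ' < η/2
  have hmono_c : ∀ ρ' : ℝ, 0 < ρ' → ρ' < η/2 → c (η/2) ≤ c ρ' := by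
    intro ρ' hρ' hρ'2
    have hiq : c (η/2) - c ρ' = ∫ ε' in Set.Ioc ρ' (η/2), (∫ τ in Set.Ioc s t, pdx u (x₁+ε') τ) := by
      have hswap : ∫ ε' in Set.Ioc ρ' (η/2), (∫ τ in Set.Ioc s t, pdx u (x₁+ε') τ)
          = ∫ τ in Set.Ioc s t, (∫ ε' in Set.Ioc ρ' (η/2), pdx u (x₁+ε') τ) := by
        apply MeasureTheory.integral_integral_swap
        rw [MeasureTheory.Measure.prod_restrict]
        have hFc : ContinuousOn (fun p : ℝ × ℝ => pdx u (x₁+p.1) p.2)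
            (Set.Icc ρ' (η/2) ×ˢ Set.Icc s t) := by
          have : ContinuousOn ((fun q : ℝ × ℝ => pdx u q.1 q.2) ∘ fun p : ℝ × ℝ => (x₁+p.1, p.2))
              (Set.Icc ρ' (η/2) ×ˢ Set.Icc s t) := by
            refine hu.cont_x.comp (by fun_prop) ?_
            rintro ⟨e, τ⟩ ⟨he, hτ⟩
            exact mem_QTN ⟨by simp at he ⊢; linarith [hx₁.1, he.1],
                by simp at he ⊢; linarith [he.2]⟩
              (by simp at he; intro hq; simp at hq; linarith [he.1])
              ⟨lt_of_lt_of_le hs hτ.1, le_trans hτ.2 htT⟩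
          exact this
        have := (hFc.integrableOn_compact (μ := MeasureTheory.volume) (isCompact_Icc.prod isCompact_Icc))
        rw [show (MeasureTheory.volume : MeasureTheory.Measure (ℝ × ℝ))
            = MeasureTheory.volume.prod MeasureTheory.volume from MeasureTheory.Measure.volume_eq_prod ℝ ℝ] at this
        exact this.mono_set (Set.prod_mono Set.Ioc_subset_Icc_self Set.Ioc_subset_Icc_self)
      have hinner : ∀ τ ∈ Set.Ioc s t,
          ∫ ε' in Set.Ioc ρ' (η/2), pdx u (x₁+ε') τ = u (x₁+η/2) τ - u (x₁+ρ') τ := by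
        intro τ hτ
        have h1 : ∫ ε' in Set.Ioc ρ' (η/2), pdx u (x₁+ε') τ
            = ∫ ε' in ρ'..(η/2), pdx u (x₁+ε') τ :=
          (intervalIntegral.integral_of_le (by linarith)).symm
        have h2 : ∫ ε' in ρ'..(η/2), (fun x => pdx u x τ) (x₁+ε')
            = ∫ x in (x₁+ρ')..(x₁+η/2), pdx u x τ :=
          intervalIntegral.integral_comp_add_left (fun x => pdx u x τ) x₁
        rw [h1]
        rw [show (fun ε' => pdx u (x₁+ε') τ) = fun ε' => (fun x => pdx u x τ) (x₁+ε') from rfl] at *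
        rw [h2]
        exact x_ftc hu hx₁ (by linarith) (by linarith) (by linarith)
          ⟨lt_trans hs hτ.1, le_trans hτ.2 htT⟩
      rw [hswap]
      rw [MeasureTheory.setIntegral_congr_fun measurableSet_Ioc hinner]
      rw [MeasureTheory.integral_sub (hIntSlice (η/2) (by positivity) (by linarith))
        (hIntSlice ρ' (le_of_lt hρ') (by linarith))]
    have hle : ∫ ε' in Set.Ioc ρ' (η/2), (∫ τ in Set.Ioc s t, pdx u (x₁+ε') τ) ≤ 0 := by
      apply MeasureTheory.setIntegral_nonpos measurableSet_Ioc
      intro ε' hε'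
      exact le_of_lt (hcon ε' (lt_trans hρ' hε'.1) (by linarith [hε'.2]))
    linarith [hiq ▸ hle]
  -- step 4 : c ρ' → 0 along ρ'ₖ = (η/2)/(k+2)
  have hlim : Tendsto (fun k : ℕ => c ((η/2)/((k:ℝ)+2))) atTop (𝓝 0) := by
    have hrk_pos : ∀ k : ℕ, 0 < (η/2)/((k:ℝ)+2) := fun k => by positivity
    have hrk_le : ∀ k : ℕ, (η/2)/((k:ℝ)+2) ≤ η := by
      intro k
      rw [div_le_iff₀ (by positivity)]
      nlinarith [Nat.cast_nonneg (α := ℝ) k]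
    have h0 : (0:ℝ) = ∫ τ in Set.Ioc s t, (0:ℝ) := by simp
    rw [h0]
    apply MeasureTheory.tendsto_integral_of_dominated_convergence (fun _ => M)
    · intro k
      exact (((hslice _ (le_of_lt (hrk_pos k)) (hrk_le k)).mono
        Set.Ioc_subset_Icc_self).aestronglyMeasurable measurableSet_Ioc)
    · refine MeasureTheory.integrableOn_const ?_
      rw [Real.volume_Ioc]; exact ENNReal.ofReal_ne_top
    · intro k
      refine (MeasureTheory.ae_restrict_iff' measurableSet_Ioc).2 (Filter.Eventually.of_forall ?_)
      intro τ hτ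
      exact hM _ (hmemx _ (le_of_lt (hrk_pos k)) (hrk_le k)) τ
        ⟨le_of_lt (lt_trans hs hτ.1), le_trans hτ.2 htT⟩
    · refine (MeasureTheory.ae_restrict_iff' measurableSet_Ioc).2 (Filter.Eventually.of_forall ?_)
      intro τ hτ
      have hτI : τ ∈ Set.Icc 0 T := ⟨le_of_lt (lt_trans hs hτ.1), le_trans hτ.2 htT⟩
      have hcx : ContinuousWithinAt (fun x => u x τ) (Set.Icc a b) x₁ :=
        (cont_slice_x hu hτI).continuousWithinAt ⟨le_of_lt hx₁.1, le_of_lt hx₁.2⟩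
      have htd : Tendsto (fun k : ℕ => x₁ + (η/2)/((k:ℝ)+2)) atTop (𝓝[Set.Icc a b] x₁) := by
        rw [tendsto_nhdsWithin_iff]
        constructor
        · have : Tendsto (fun k : ℕ => x₁ + (η/2)/((k:ℝ)+2)) atTop (𝓝 (x₁ + 0)) :=
            tendsto_const_nhds.add (tendsto_c_div (η/2))
          simpa using this
        · exact Filter.Eventually.of_forall
            (fun k => hmemx _ (le_of_lt (hrk_pos k)) (hrk_le k))
      have := hcx.tendsto.comp htd
      rw [u_x₁_zero hx₁ hu hτI] at this
      exact this
  have hfinal : c (η/2) ≤ 0 := by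
    apply ge_of_tendsto hlim
    refine Filter.Eventually.of_forall (fun k => ?_)
    apply hmono_c
    · positivity
    · rw [div_lt_iff₀ (by positivity)]
      nlinarith [Nat.cast_nonneg (α := ℝ) k, hη]
  linarith

end GoodEps

section KeyIneq

variable {a b T x₁ : ℝ} {u₀ : ℝ → ℝ} {u : ℝ → ℝ → ℝ}

set_option maxHeartbeats 1000000 in
/-- the fundamental a-priori inequality obtained by testing the equation for (log u)_t -/
lemma key_ineq (hu : IsClassicalSol a b T {x₁} u₀ u) (hx₁ : x₁ ∈ Set.Ioo a b)
    {s t ε δ₁ δ₂ δ₃ M K : ℝ} {φ φd φdd : ℝ → ℝ}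
    (hs : 0 < s) (hst : s < t) (htT : t ≤ T)
    (hε : 0 < ε) (hεδ : ε < δ₁) (h12 : δ₁ < δ₂) (h23 : δ₂ < δ₃) (hδ₃b : x₁ + δ₃ < b)
    (hgood : 0 ≤ ∫ τ in Set.Ioc s t, pdx u (x₁+ε) τ)
    (hφd : ∀ x, HasDerivAt φ (φd x) x) (hφd2 : ∀ x, HasDerivAt φd (φdd x) x)
    (hφc : Continuous φ) (hφdc : Continuous φd) (hφddc : Continuous φdd)
    (hone : ∀ x, x ≤ x₁ + δ₁ → φ x = 1) (hzero : ∀ x, x₁ + δ₂ ≤ x → φ x = 0)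
    (hφ0 : ∀ x, 0 ≤ φ x) (hφ1 : ∀ x, φ x ≤ 1)
    (hφdl : ∀ x, x < x₁ + δ₁ → φd x = 0) (hφdr : ∀ x, x₁ + δ₂ < x → φd x = 0)
    (hM1 : 1 ≤ M) (hM : ∀ x ∈ Set.Icc a b, ∀ t ∈ Set.Icc 0 T, |u x t| ≤ M)
    (hK : ∀ x ∈ Set.Icc x₁ (x₁+δ₃), |φdd x| ≤ K) (hK0 : 0 ≤ K) :
    ∫ x in Set.Ioc (x₁+ε) (x₁+δ₃), (-Real.log (u x s)) * φ x
      ≤ (∫ x in Set.Ioc (x₁+ε) (x₁+δ₃), (-Real.log (u x t)) * φ x)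
        + (M*K + (1+M)) * δ₃ * T := by
  have hab : a < b := lt_trans hx₁.1 hx₁.2
  set A := x₁ + ε with hA
  set B := x₁ + δ₃ with hB
  have hδ₁pos : 0 < δ₁ := lt_trans hε hεδ
  have hAx : x₁ < A := by rw [hA]; linarith
  have hAB : A ≤ B := by rw [hA, hB]; linarith
  have hBb : B < b := hδ₃b
  have hsub_ab : Set.Icc A B ⊆ Set.Ioo a b := fun x hx =>
    ⟨lt_trans hx₁.1 (lt_of_lt_of_le hAx hx.1), lt_of_le_of_lt hx.2 hBb⟩
  have htI : t ∈ Set.Ioc 0 T := ⟨lt_trans hs hst, htT⟩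
  have hsI : s ∈ Set.Ioc 0 T := ⟨hs, le_trans (le_of_lt hst) htT⟩
  -- positivity on the strip
  have hup : ∀ x ∈ Set.Icc A B, ∀ τ ∈ Set.Ioc 0 T, 0 < u x τ := by
    intro x hx τ hτ
    exact upos hab hx₁ hu ⟨lt_of_lt_of_le hAx hx.1, le_of_lt (lt_of_le_of_lt hx.2 hBb)⟩ hτ
  -- continuity of log-slices
  have hlogslice : ∀ σ, σ ∈ Set.Ioc 0 T →
      ContinuousOn (fun x => Real.log (u x σ) * φ x) (Set.Icc A B) := by
    intro σ hσ
    apply ContinuousOn.mul _ hφc.continuousOn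
    apply ContinuousOn.log
    · exact (cont_slice_x hu ⟨le_of_lt hσ.1, hσ.2⟩).mono
        (fun x hx => Set.mem_Icc_of_Ioo (hsub_ab hx))
    · intro x hx; exact ne_of_gt (hup x hx σ hσ)
  have hlogint : ∀ σ, σ ∈ Set.Ioc 0 T →
      MeasureTheory.IntegrableOn (fun x => Real.log (u x σ) * φ x) (Set.Ioc A B) := by
    intro σ hσ
    exact ((hlogslice σ hσ).integrableOn_compact isCompact_Icc).mono_set Set.Ioc_subset_Icc_self
  -- the time FTC pointwise, tested against φ
  have hftc : ∀ x ∈ Set.Ioc A B,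
      Real.log (u x t) * φ x - Real.log (u x s) * φ x
        = ∫ τ in Set.Ioc s t, (pdxx u x τ + (1 - u x τ)) * φ x := by
    intro x hx
    have hxI : x ∈ Set.Ioo x₁ b :=
      ⟨lt_trans hAx hx.1, lt_of_le_of_lt hx.2 hBb⟩
    have h1 := time_ftc hu hx₁ hxI hs (le_of_lt hst) htT
    have h2 : ∫ τ in s..t, (pdxx u x τ + (1 - u x τ)) * φ x
        = (∫ τ in s..t, (pdxx u x τ + (1 - u x τ))) * φ x :=
      intervalIntegral.integral_mul_const _ _
    rw [← intervalIntegral.integral_of_le (le_of_lt hst), h2, h1]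
    ring
  -- joint continuity of the integrand
  have hGc : ContinuousOn (fun p : ℝ × ℝ => (pdxx u p.1 p.2 + (1 - u p.1 p.2)) * φ p.1)
      (Set.Icc A B ×ˢ Set.Icc s t) := by
    have hmem : ∀ p : ℝ × ℝ, p ∈ Set.Icc A B ×ˢ Set.Icc s t →
        p ∈ QT a b T \ NSet {x₁} T := by
      rintro ⟨x, τ⟩ ⟨hx, hτ⟩
      exact mem_QTN (hsub_ab hx) (ne_of_gt (lt_of_lt_of_le hAx hx.1))
        ⟨lt_of_lt_of_le hs hτ.1, le_trans hτ.2 htT⟩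
    apply ContinuousOn.mul
    · apply ContinuousOn.add
      · exact hu.cont_xx.mono (fun p hp => hmem p hp)
      · apply ContinuousOn.sub continuousOn_const
        refine hu.cont.mono (fun p hp => ?_)
        have := hmem p hp
        exact ⟨Set.mem_Icc_of_Ioo this.1.1, ⟨le_of_lt this.1.2.1, this.1.2.2⟩⟩
    · exact (hφc.comp continuous_fst).continuousOn
  have hGint : MeasureTheory.Integrable
      (Function.uncurry (fun x τ => (pdxx u x τ + (1 - u x τ)) * φ x))
      ((MeasureTheory.volume.restrict (Set.Ioc A B)).prod
        (MeasureTheory.volume.restrict (Set.Ioc s t))) := by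
    rw [MeasureTheory.Measure.prod_restrict]
    have := (hGc.integrableOn_compact (μ := MeasureTheory.volume)
      (isCompact_Icc.prod isCompact_Icc))
    rw [show (MeasureTheory.volume : MeasureTheory.Measure (ℝ × ℝ))
        = MeasureTheory.volume.prod MeasureTheory.volume from MeasureTheory.Measure.volume_eq_prod ℝ ℝ] at this
    exact this.mono_set (Set.prod_mono Set.Ioc_subset_Icc_self Set.Ioc_subset_Icc_self)
  -- integrate the FTC identity over Ioc A B and swap
  have hmain : (∫ x in Set.Ioc A B, Real.log (u x t) * φ x)
      - (∫ x in Set.Ioc A B, Real.log (u x s) * φ x)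
      = ∫ τ in Set.Ioc s t, (∫ x in Set.Ioc A B, (pdxx u x τ + (1 - u x τ)) * φ x) := by
    rw [← MeasureTheory.integral_sub (hlogint t htI) (hlogint s hsI)]
    rw [MeasureTheory.setIntegral_congr_fun measurableSet_Ioc hftc]
    exact MeasureTheory.integral_integral_swap hGint
  -- compute the inner integral by parts
  have hinner : ∀ τ ∈ Set.Ioc s t,
      ∫ x in Set.Ioc A B, (pdxx u x τ + (1 - u x τ)) * φ x
        = -(pdx u A τ) + ∫ x in A..B, (φdd x * u x τ + (1 - u x τ) * φ x) := by
    intro τ hτ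
    have hτI : τ ∈ Set.Ioc 0 T := ⟨lt_trans hs hτ.1, le_trans hτ.2 htT⟩
    have hcxx : ContinuousOn (fun x => pdxx u x τ) (Set.Icc A B) :=
      cont_pdxx_slice hu hx₁ hAx hBb hτI
    have hcu : ContinuousOn (fun x => u x τ) (Set.Icc A B) :=
      (cont_slice_x hu ⟨le_of_lt hτI.1, hτI.2⟩).mono
        (fun x hx => Set.mem_Icc_of_Ioo (hsub_ab hx))
    have h1 : ∫ x in Set.Ioc A B, (pdxx u x τ + (1 - u x τ)) * φ x
        = ∫ x in A..B, (φ x * pdxx u x τ + (1 - u x τ) * φ x) := by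
      rw [intervalIntegral.integral_of_le hAB]
      apply MeasureTheory.setIntegral_congr_fun measurableSet_Ioc
      intro x _; ring
    have hi1 : IntervalIntegrable (fun x => φ x * pdxx u x τ) MeasureTheory.volume A B := by
      apply ContinuousOn.intervalIntegrable
      rw [Set.uIcc_of_le hAB]; exact hφc.continuousOn.mul hcxx
    have hi2 : IntervalIntegrable (fun x => (1 - u x τ) * φ x) MeasureTheory.volume A B := by
      apply ContinuousOn.intervalIntegrable
      rw [Set.uIcc_of_le hAB]
      exact (continuousOn_const.sub hcu).mul hφc.continuousOn
    have h2 := intervalIntegral.integral_add hi1 hi2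
    have h3 : ∫ x in A..B, φ x * pdxx u x τ
        = -(pdx u A τ) + ∫ x in A..B, φdd x * u x τ :=
      ibp_x hu hx₁ hAx hAB hBb hτI hφd hφd2 hφdc hφddc
        (hone A (by rw [hA]; linarith)) (hzero B (by rw [hB]; linarith))
        (hφdl A (by rw [hA]; linarith)) (hφdr B (by rw [hB]; linarith))
    have hi3 : IntervalIntegrable (fun x => φdd x * u x τ) MeasureTheory.volume A B := by
      apply ContinuousOn.intervalIntegrable
      rw [Set.uIcc_of_le hAB]; exact hφddc.continuousOn.mul hcu
    have h4 := intervalIntegral.integral_add hi3 hi2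
    rw [h1, h2, h3, h4]
    ring
  -- bound the error term
  set C₂ := (M*K + (1+M)) * δ₃ with hC₂
  have hδ₃pos : 0 < δ₃ := by linarith
  have hC₂0 : 0 ≤ C₂ := by
    apply mul_nonneg _ (le_of_lt hδ₃pos)
    nlinarith
  have hW : ∀ τ ∈ Set.Ioc s t,
      |∫ x in A..B, (φdd x * u x τ + (1 - u x τ) * φ x)| ≤ C₂ := by
    intro τ hτ
    have hτI : τ ∈ Set.Icc 0 T := ⟨le_of_lt (lt_trans hs hτ.1), le_trans hτ.2 htT⟩
    have hbd : ∀ x ∈ Set.Ioc A B, |φdd x * u x τ + (1 - u x τ) * φ x| ≤ M*K + (1+M) := by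
      intro x hx
      have hxab : x ∈ Set.Icc a b := Set.mem_Icc_of_Ioo (hsub_ab (Set.Ioc_subset_Icc_self hx))
      have h1 : |u x τ| ≤ M := hM x hxab τ hτI
      have h2 : |φdd x| ≤ K := hK x ⟨le_of_lt (lt_trans hAx hx.1), hx.2⟩
      have h3 : |φ x| ≤ 1 := abs_le.2 ⟨by linarith [hφ0 x], hφ1 x⟩
      calc |φdd x * u x τ + (1 - u x τ) * φ x|
          ≤ |φdd x * u x τ| + |(1 - u x τ) * φ x| := abs_add_le _ _
      _ = |φdd x| * |u x τ| + |1 - u x τ| * |φ x| := by rw [abs_mul, abs_mul]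
      _ ≤ K * M + (1 + M) * 1 := by
          apply add_le_add
          · exact mul_le_mul h2 h1 (abs_nonneg _) hK0
          · apply mul_le_mul _ h3 (abs_nonneg _) (by linarith)
            calc |1 - u x τ| ≤ |(1:ℝ)| + |u x τ| := abs_sub _ _
            _ ≤ 1 + M := by rw [abs_one]; linarith
      _ = M*K + (1+M) := by ring
    have := intervalIntegral.norm_integral_le_of_norm_le_const
      (C := M*K + (1+M))
      (f := fun x => φdd x * u x τ + (1 - u x τ) * φ x) (a := A) (b := B) ?_
    · rw [Real.norm_eq_abs] at this
      calc |∫ x in A..B, (φdd x * u x τ + (1 - u x τ) * φ x)|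
          ≤ (M*K + (1+M)) * |B - A| := this
      _ ≤ (M*K + (1+M)) * δ₃ := by
          apply mul_le_mul_of_nonneg_left _ (by nlinarith)
          rw [abs_of_nonneg (by linarith)]
          rw [hA, hB]; linarith
    · intro x hx
      rw [Set.uIoc_of_le hAB] at hx
      rw [Real.norm_eq_abs]
      exact hbd x hx
  -- integrate in time
  have hIτ : MeasureTheory.IntegrableOn
      (fun τ => ∫ x in Set.Ioc A B, (pdxx u x τ + (1 - u x τ)) * φ x) (Set.Ioc s t) := by
    have := hGint.integral_prod_right
    simpa [Function.uncurry, MeasureTheory.IntegrableOn] using this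
  have hIpdx : MeasureTheory.IntegrableOn (fun τ => pdx u A τ) (Set.Ioc s t) := by
    have hc : ContinuousOn (fun τ => pdx u A τ) (Set.Icc s t) := by
      have : ContinuousOn ((fun p : ℝ × ℝ => pdx u p.1 p.2) ∘ fun τ => (A, τ)) (Set.Icc s t) := by
        refine hu.cont_x.comp (by fun_prop) ?_
        intro τ hτ
        exact mem_QTN ⟨lt_trans hx₁.1 hAx, lt_of_le_of_lt hAB hBb⟩ (ne_of_gt hAx)
          ⟨lt_of_lt_of_le hs hτ.1, le_trans hτ.2 htT⟩
      exact this
    exact (hc.integrableOn_compact isCompact_Icc).mono_set Set.Ioc_subset_Icc_self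
  have hbound : ∫ τ in Set.Ioc s t, (∫ x in Set.Ioc A B, (pdxx u x τ + (1 - u x τ)) * φ x)
      ≤ C₂ * T := by
    have hle : ∀ τ ∈ Set.Ioc s t,
        (∫ x in Set.Ioc A B, (pdxx u x τ + (1 - u x τ)) * φ x)
          ≤ C₂ - pdx u A τ := by
      intro τ hτ
      rw [hinner τ hτ]
      have := (abs_le.1 (hW τ hτ)).2
      linarith
    have hIrhs : MeasureTheory.IntegrableOn (fun τ => C₂ - pdx u A τ) (Set.Ioc s t) :=
      (MeasureTheory.integrableOn_const (by rw [Real.volume_Ioc]; exact ENNReal.ofReal_ne_top)).sub hIpdx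
    calc ∫ τ in Set.Ioc s t, (∫ x in Set.Ioc A B, (pdxx u x τ + (1 - u x τ)) * φ x)
        ≤ ∫ τ in Set.Ioc s t, (C₂ - pdx u A τ) :=
          MeasureTheory.setIntegral_mono_on hIτ hIrhs measurableSet_Ioc hle
    _ = C₂ * (MeasureTheory.volume (Set.Ioc s t)).toReal - ∫ τ in Set.Ioc s t, pdx u A τ := by
        rw [MeasureTheory.integral_sub
          (show MeasureTheory.Integrable (fun _ => C₂) (MeasureTheory.volume.restrict (Set.Ioc s t)) from MeasureTheory.integrableOn_const (by rw [Real.volume_Ioc]; exact ENNReal.ofReal_ne_top))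
          hIpdx]
        rw [MeasureTheory.setIntegral_const, smul_eq_mul, mul_comm, MeasureTheory.Measure.real]
    _ ≤ C₂ * (MeasureTheory.volume (Set.Ioc s t)).toReal := by linarith [hgood]
    _ ≤ C₂ * T := by
        apply mul_le_mul_of_nonneg_left _ hC₂0
        rw [Real.volume_Ioc, ENNReal.toReal_ofReal (by linarith)]
        linarith
  -- conclude
  have hfinal : (∫ x in Set.Ioc A B, Real.log (u x t) * φ x)
      - (∫ x in Set.Ioc A B, Real.log (u x s) * φ x) ≤ C₂ * T := by
    rw [hmain]; exact hbound
  have hneg : ∀ σ ∈ Set.Ioc 0 T, ∫ x in Set.Ioc A B, (-Real.log (u x σ)) * φ x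
      = -∫ x in Set.Ioc A B, Real.log (u x σ) * φ x := by
    intro σ _
    rw [← MeasureTheory.integral_neg]
    apply MeasureTheory.setIntegral_congr_fun measurableSet_Ioc
    intro x _; ring
  rw [hneg s hsI, hneg t htI]
  rw [hC₂] at hfinal ⊢
  linarith

end KeyIneq

section Core

variable {a b T x₁ : ℝ} {u₀ : ℝ → ℝ} {u : ℝ → ℝ → ℝ}

set_option maxHeartbeats 2000000 in
/-- the core result: the weighted log-integral is infinite for all positive times -/
lemma core (hab : a < b) (hT : 0 < T)
    (h₀m : StrictMonoOn u₀ (Set.Icc a b)) (h₀b : u₀ b = 1)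
    (hx₁ : x₁ ∈ Set.Ioo a b) (h₀z : u₀ x₁ = 0)
    (hlog : ∫⁻ x in Set.Ioo x₁ b, ENNReal.ofReal |Real.log (u₀ x)| = ⊤)
    (hu : IsClassicalSol a b T {x₁} u₀ u) :
    ∃ δ₁ : ℝ, 0 < δ₁ ∧ x₁ + δ₁ < b ∧
      (∀ x ∈ Set.Ioc x₁ (x₁+δ₁), ∀ t ∈ Set.Icc 0 T, u x t < 1/2) ∧
      (∀ t ∈ Set.Ioc 0 T, ∫⁻ x in Set.Ioo x₁ (x₁+δ₁),
        ENNReal.ofReal (-Real.log (u x t)) = ⊤) := by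
  obtain ⟨d, hd, hdb, hstrip⟩ := u_strip hab hT hx₁ hu
  obtain ⟨M, hM1, hM⟩ := u_bound hu
  set δ₁ := d/4 with hδ₁def
  set δ₂ := d/2 with hδ₂def
  set δ₃ := d*(3/4) with hδ₃def
  set B := x₁ + δ₃ with hBdef
  have hδ₁pos : 0 < δ₁ := by rw [hδ₁def]; linarith
  have h12 : δ₁ < δ₂ := by rw [hδ₁def, hδ₂def]; linarith
  have h23 : δ₂ < δ₃ := by rw [hδ₂def, hδ₃def]; linarith
  have hδ₃d : δ₃ < d := by rw [hδ₃def]; linarith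
  have hδ₃b : x₁ + δ₃ < b := by linarith
  have hδ₁b : x₁ + δ₁ < b := by linarith
  obtain ⟨φ, φd, φdd, hφd, hφd2, hφc, hφdc, hφddc, hone, hzero, hφ0, hφ1, hφdl, hφdr⟩ :=
    exists_phi x₁ δ₁ δ₂ hδ₁pos h12
  obtain ⟨K, hK⟩ := isCompact_Icc.exists_bound_of_continuousOn
    (s := Set.Icc x₁ B) hφddc.continuousOn
  have hK' : ∀ x ∈ Set.Icc x₁ B, |φdd x| ≤ K := by
    intro x hx; have := hK x hx; rwa [Real.norm_eq_abs] at this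
  have hK0 : 0 ≤ K := le_trans (abs_nonneg _) (hK' x₁ ⟨le_refl _, by rw [hBdef]; linarith⟩)
  set C₃ := (M*K + (1+M)) * δ₃ * T with hC₃def
  have hC₃0 : 0 ≤ C₃ := by
    apply mul_nonneg (mul_nonneg (by nlinarith) (by linarith)) (le_of_lt hT)
  -- basic strip facts
  have hIocsub : Set.Ioc x₁ B ⊆ Set.Icc a b := fun x hx =>
    ⟨le_of_lt (lt_trans hx₁.1 hx.1), le_of_lt (lt_of_le_of_lt hx.2 hδ₃b)⟩
  have hupos : ∀ x ∈ Set.Ioc x₁ B, ∀ τ ∈ Set.Ioc 0 T, 0 < u x τ := by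
    intro x hx τ hτ
    exact upos hab hx₁ hu ⟨hx.1, le_of_lt (lt_of_le_of_lt hx.2 hδ₃b)⟩ hτ
  have hsmall : ∀ x ∈ Set.Ioc x₁ B, ∀ τ ∈ Set.Icc 0 T, u x τ < 1/2 := by
    intro x hx τ hτ
    have h1 : |x - x₁| ≤ d := by
      rw [abs_of_nonneg (by linarith [hx.1])]
      have := hx.2; rw [hBdef] at this; linarith
    exact lt_of_le_of_lt (le_abs_self _) (hstrip x (hIocsub hx) τ hτ h1)
  have hnn : ∀ σ ∈ Set.Ioc 0 T, ∀ x ∈ Set.Ioc x₁ B, 0 ≤ (-Real.log (u x σ)) * φ x := by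
    intro σ hσ x hx
    apply mul_nonneg _ (hφ0 x)
    rw [neg_nonneg]
    apply Real.log_nonpos (le_of_lt (hupos x hx σ hσ))
    apply le_of_lt (lt_of_lt_of_le (hsmall x hx σ ⟨le_of_lt hσ.1, hσ.2⟩) (by norm_num))
  -- continuity of the integrands on right-closed strips
  have hcontf : ∀ σ ∈ Set.Ioc 0 T, ∀ A' : ℝ, x₁ < A' →
      ContinuousOn (fun x => (-Real.log (u x σ)) * φ x) (Set.Icc A' B) := by
    intro σ hσ A' hA'
    apply ContinuousOn.mul _ hφc.continuousOn
    apply ContinuousOn.neg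
    apply ContinuousOn.log
    · exact (cont_slice_x hu ⟨le_of_lt hσ.1, hσ.2⟩).mono
        (fun x hx => hIocsub ⟨lt_of_lt_of_le hA' hx.1, hx.2⟩)
    · intro x hx
      exact ne_of_gt (hupos x ⟨lt_of_lt_of_le hA' hx.1, hx.2⟩ σ hσ)
  have hintf : ∀ σ ∈ Set.Ioc 0 T, ∀ A' : ℝ, x₁ < A' →
      MeasureTheory.IntegrableOn (fun x => (-Real.log (u x σ)) * φ x) (Set.Ioc A' B) := by
    intro σ hσ A' hA'
    exact ((hcontf σ hσ A' hA').integrableOn_compact isCompact_Icc).mono_set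
      Set.Ioc_subset_Icc_self
  have hnnae : ∀ σ ∈ Set.Ioc 0 T, ∀ A' : ℝ, x₁ < A' →
      0 ≤ᵐ[MeasureTheory.volume.restrict (Set.Ioc A' B)]
        (fun x => (-Real.log (u x σ)) * φ x) := by
    intro σ hσ A' hA'
    refine (MeasureTheory.ae_restrict_iff' measurableSet_Ioc).2 (Filter.Eventually.of_forall ?_)
    intro x hx
    exact hnn σ hσ x ⟨lt_trans hA' hx.1, hx.2⟩
  have hmeasf : ∀ σ ∈ Set.Ioc 0 T,
      AEMeasurable (fun x => ENNReal.ofReal ((-Real.log (u x σ)) * φ x))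
        (MeasureTheory.volume.restrict (Set.Ioo x₁ B)) := by
    intro σ hσ
    apply ContinuousOn.aemeasurable _ measurableSet_Ioo
    apply ENNReal.continuous_ofReal.comp_continuousOn
    apply ContinuousOn.mul _ hφc.continuousOn
    apply ContinuousOn.neg
    apply ContinuousOn.log
    · exact (cont_slice_x hu ⟨le_of_lt hσ.1, hσ.2⟩).mono
        (fun x hx => hIocsub ⟨hx.1, le_of_lt hx.2⟩)
    · intro x hx
      exact ne_of_gt (hupos x ⟨hx.1, le_of_lt hx.2⟩ σ hσ)
  refine ⟨δ₁, hδ₁pos, hδ₁b, fun x hx τ hτ => hsmall x ⟨hx.1, by rw [hBdef]; linarith [hx.2]⟩ τ hτ, ?_⟩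
  intro t ht
  set Kf : ℝ → ℝ≥0∞ := fun σ => ∫⁻ x in Set.Ioo x₁ B,
    ENNReal.ofReal ((-Real.log (u x σ)) * φ x) with hKf
  -- the chain inequality
  have hchain : ∀ s : ℝ, 0 < s → s < t → Kf s ≤ Kf t + ENNReal.ofReal C₃ := by
    intro s hs hst
    have hsI : s ∈ Set.Ioc 0 T := ⟨hs, le_of_lt (lt_of_lt_of_le hst ht.2)⟩
    apply lint_sup_bound (hmeasf s hsI)
    intro ε hε
    set η := min ε δ₁ with hηdef
    have hη : 0 < η := lt_min hε hδ₁pos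
    have hηb : x₁ + η < b := by
      have := min_le_right ε δ₁; linarith
    obtain ⟨ε', hε'1, hε'2, hgood⟩ := good_eps hu hx₁ hs hst ht.2 hη hηb
    have hε'δ₁ : ε' < δ₁ := lt_of_lt_of_le hε'2 (min_le_right _ _)
    have hε'ε : ε' < ε := lt_of_lt_of_le hε'2 (min_le_left _ _)
    have hA'x : x₁ < x₁ + ε' := by linarith
    calc ∫⁻ x in Set.Ioo (x₁+ε) B, ENNReal.ofReal ((-Real.log (u x s)) * φ x)
        ≤ ∫⁻ x in Set.Ioc (x₁+ε') B, ENNReal.ofReal ((-Real.log (u x s)) * φ x) := by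
          apply lintegral_mono_set
          intro x hx
          exact ⟨by linarith [hx.1], le_of_lt hx.2⟩
    _ = ENNReal.ofReal (∫ x in Set.Ioc (x₁+ε') B, (-Real.log (u x s)) * φ x) :=
          (MeasureTheory.ofReal_integral_eq_lintegral_ofReal
            (hintf s hsI _ hA'x) (hnnae s hsI _ hA'x)).symm
    _ ≤ ENNReal.ofReal ((∫ x in Set.Ioc (x₁+ε') B, (-Real.log (u x t)) * φ x) + C₃) := by
          apply ENNReal.ofReal_le_ofReal
          exact key_ineq hu hx₁ hs hst ht.2 hε'1 hε'δ₁ h12 h23 hδ₃b hgood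
            hφd hφd2 hφc hφdc hφddc hone hzero hφ0 hφ1 hφdl hφdr hM1 hM hK' hK0
    _ ≤ ENNReal.ofReal (∫ x in Set.Ioc (x₁+ε') B, (-Real.log (u x t)) * φ x)
          + ENNReal.ofReal C₃ := ENNReal.ofReal_add_le
    _ = (∫⁻ x in Set.Ioc (x₁+ε') B, ENNReal.ofReal ((-Real.log (u x t)) * φ x))
          + ENNReal.ofReal C₃ := by
          rw [MeasureTheory.ofReal_integral_eq_lintegral_ofReal
            (hintf t ht _ hA'x) (hnnae t ht _ hA'x)]
    _ ≤ Kf t + ENNReal.ofReal C₃ := by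
          apply add_le_add_left
          rw [← MeasureTheory.Measure.restrict_congr_set MeasureTheory.Ioo_ae_eq_Ioc]
          apply lintegral_mono_set
          intro x hx
          exact ⟨lt_trans hA'x hx.1, hx.2⟩
  -- Fatou as s → 0
  have hsk : ∀ k : ℕ, 0 < t/((k:ℝ)+2) ∧ t/((k:ℝ)+2) < t := by
    intro k
    constructor
    · exact div_pos ht.1 (by positivity)
    · rw [div_lt_iff₀ (by positivity)]
      nlinarith [Nat.cast_nonneg (α := ℝ) k, ht.1]
  have hT₀ : ∫⁻ x in Set.Ioo x₁ B, ENNReal.ofReal ((-Real.log (u₀ x)) * φ x) = ⊤ := by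
    have hu₀pos : ∀ x ∈ Set.Ioo x₁ b, 0 < u₀ x := by
      intro x hx
      have := h₀m ⟨le_of_lt hx₁.1, le_of_lt hx₁.2⟩
        ⟨le_of_lt (lt_trans hx₁.1 hx.1), le_of_lt hx.2⟩ hx.1
      rwa [h₀z] at this
    have hu₀lt1 : ∀ x ∈ Set.Ioo x₁ b, u₀ x < 1 := by
      intro x hx
      have := h₀m ⟨le_of_lt (lt_trans hx₁.1 hx.1), le_of_lt hx.2⟩
        ⟨le_of_lt hab, le_refl b⟩ hx.2
      rwa [h₀b] at this
    have habs : ∀ x ∈ Set.Ioo x₁ b, |Real.log (u₀ x)| = -Real.log (u₀ x) := by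
      intro x hx
      exact abs_of_neg (Real.log_neg (hu₀pos x hx) (hu₀lt1 x hx))
    have hδ₁mem : x₁ + δ₁ ∈ Set.Ioo x₁ b := ⟨by linarith, hδ₁b⟩
    have h1 : ∫⁻ x in Set.Ioo x₁ (x₁+δ₁), ENNReal.ofReal (|Real.log (u₀ x)|) = ⊤ := by
      apply lint_split_top hlog (C := ENNReal.ofReal (-Real.log (u₀ (x₁+δ₁))))
        ENNReal.ofReal_ne_top
      intro x hx
      have hxI : x ∈ Set.Ioo x₁ b := ⟨lt_of_lt_of_le (by linarith) hx.1, hx.2⟩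
      rw [habs x hxI]
      apply ENNReal.ofReal_le_ofReal
      have hle : u₀ (x₁+δ₁) ≤ u₀ x := by
        apply h₀m.monotoneOn ⟨le_of_lt (lt_trans hx₁.1 hδ₁mem.1), le_of_lt hδ₁mem.2⟩
          ⟨le_of_lt (lt_trans hx₁.1 hxI.1), le_of_lt hxI.2⟩ hx.1
      have := Real.log_le_log (hu₀pos _ hδ₁mem) hle
      linarith
    have h2 : ∫⁻ x in Set.Ioo x₁ (x₁+δ₁), ENNReal.ofReal ((-Real.log (u₀ x)) * φ x) = ⊤ := by
      rw [← h1]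
      apply MeasureTheory.setLIntegral_congr_fun measurableSet_Ioo
      intro x hx
      have hxI : x ∈ Set.Ioo x₁ b := ⟨hx.1, lt_trans hx.2 hδ₁b⟩
      beta_reduce
      rw [hone x (le_of_lt hx.2), habs x hxI]
      ring_nf
    rw [eq_top_iff, ← h2]
    apply lintegral_mono_set
    intro x hx
    exact ⟨hx.1, by rw [hBdef]; linarith [hx.2]⟩
  have hKtop : (⊤:ℝ≥0∞) ≤ Kf t + ENNReal.ofReal C₃ := by
    have hfat := MeasureTheory.lintegral_liminf_le'
      (μ := MeasureTheory.volume.restrict (Set.Ioo x₁ B)) (u := Filter.atTop)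
      (f := fun (k : ℕ) x => ENNReal.ofReal ((-Real.log (u x (t/((k:ℝ)+2)))) * φ x))
      (fun k => hmeasf _ ⟨(hsk k).1, le_of_lt (lt_of_lt_of_le (hsk k).2 ht.2)⟩)
    have hcong : ∫⁻ x in Set.Ioo x₁ B,
        Filter.liminf (fun k : ℕ => ENNReal.ofReal ((-Real.log (u x (t/((k:ℝ)+2)))) * φ x)) Filter.atTop
        = ∫⁻ x in Set.Ioo x₁ B, ENNReal.ofReal ((-Real.log (u₀ x)) * φ x) := by
      apply MeasureTheory.setLIntegral_congr_fun measurableSet_Ioo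
      intro x hx
      have hxab : x ∈ Set.Icc a b := hIocsub ⟨hx.1, le_of_lt hx.2⟩
      have hxIoo : x ∈ Set.Ioo a b :=
        ⟨lt_trans hx₁.1 hx.1, lt_of_lt_of_le hx.2 (le_of_lt hδ₃b)⟩
      have hcw : ContinuousWithinAt (fun τ => u x τ) (Set.Icc 0 T) 0 :=
        (cont_slice_t hu hxab).continuousWithinAt ⟨le_refl _, le_of_lt hT⟩
      have htd : Tendsto (fun k : ℕ => t/((k:ℝ)+2)) atTop (𝓝[Set.Icc 0 T] 0) := by
        rw [tendsto_nhdsWithin_iff]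
        exact ⟨tendsto_c_div t, Filter.Eventually.of_forall (fun k =>
          ⟨le_of_lt (hsk k).1, le_of_lt (lt_of_lt_of_le (hsk k).2 ht.2)⟩)⟩
      have ht1 : Tendsto (fun k : ℕ => u x (t/((k:ℝ)+2))) atTop (𝓝 (u₀ x)) := by
        have := hcw.tendsto.comp htd
        rwa [hu.init x hxIoo] at this
      have hu₀x : 0 < u₀ x := by
        have := h₀m ⟨le_of_lt hx₁.1, le_of_lt hx₁.2⟩ hxab hx.1
        rwa [h₀z] at this
      have ht2 : Tendsto (fun k : ℕ => Real.log (u x (t/((k:ℝ)+2)))) atTop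
          (𝓝 (Real.log (u₀ x))) :=
        ((Real.continuousAt_log (ne_of_gt hu₀x)).tendsto).comp ht1
      have ht3 : Tendsto (fun k : ℕ => ENNReal.ofReal ((-Real.log (u x (t/((k:ℝ)+2)))) * φ x))
          atTop (𝓝 (ENNReal.ofReal ((-Real.log (u₀ x)) * φ x))) :=
        (ENNReal.continuous_ofReal.tendsto _).comp (ht2.neg.mul_const _)
      exact ht3.liminf_eq
    rw [hcong, hT₀] at hfat
    refine le_trans hfat ?_
    apply Filter.liminf_le_of_frequently_le' 
    apply Filter.Frequently.of_forall
    intro k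
    exact hchain _ (hsk k).1 (hsk k).2
  have hKt : Kf t = ⊤ := by
    by_contra hne
    have : Kf t + ENNReal.ofReal C₃ ≠ ⊤ := ENNReal.add_ne_top.2 ⟨hne, ENNReal.ofReal_ne_top⟩
    exact this (top_le_iff.1 hKtop)
  -- drop the weight φ and localize
  have htop1 : ∫⁻ x in Set.Ioo x₁ B, ENNReal.ofReal (-Real.log (u x t)) = ⊤ := by
    rw [eq_top_iff, ← hKt]
    apply MeasureTheory.setLIntegral_mono' measurableSet_Ioo
    intro x hx
    apply ENNReal.ofReal_le_ofReal
    have h0 : 0 ≤ -Real.log (u x t) := by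
      rw [neg_nonneg]
      apply Real.log_nonpos (le_of_lt (hupos x ⟨hx.1, le_of_lt hx.2⟩ t ht))
      exact le_of_lt (lt_of_lt_of_le
        (hsmall x ⟨hx.1, le_of_lt hx.2⟩ t ⟨le_of_lt ht.1, ht.2⟩) (by norm_num))
    exact mul_le_of_le_one_right h0 (hφ1 x)
  obtain ⟨x₀, hx₀, hmin⟩ := isCompact_Icc.exists_isMinOn
    (Set.nonempty_Icc.2 (show x₁+δ₁ ≤ B by rw [hBdef]; linarith))
    ((cont_slice_x hu ⟨le_of_lt ht.1, ht.2⟩).mono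
      (fun x hx => hIocsub ⟨lt_of_lt_of_le (by linarith) hx.1, hx.2⟩))
  have hm : 0 < u x₀ t := hupos x₀ ⟨lt_of_lt_of_le (by linarith) hx₀.1, hx₀.2⟩ t ht
  apply lint_split_top htop1 (C := ENNReal.ofReal (-Real.log (u x₀ t))) ENNReal.ofReal_ne_top
  intro x hx
  apply ENNReal.ofReal_le_ofReal
  have hle : u x₀ t ≤ u x t := hmin ⟨hx.1, le_of_lt hx.2⟩
  have := Real.log_le_log hm hle
  linarith

end Core

section Slope

variable {a b T x₁ : ℝ} {u₀ : ℝ → ℝ} {u : ℝ → ℝ → ℝ}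

/-- localization of the divergent integral towards x₁ -/
lemma localize (hab : a < b) (hx₁ : x₁ ∈ Set.Ioo a b) (hu : IsClassicalSol a b T {x₁} u₀ u)
    {t δ₁ ρ : ℝ} (ht : t ∈ Set.Ioc 0 T) (hδ₁b : x₁ + δ₁ < b) (hρ : 0 < ρ) (hρδ : ρ ≤ δ₁)
    (htop : ∫⁻ x in Set.Ioo x₁ (x₁+δ₁), ENNReal.ofReal (-Real.log (u x t)) = ⊤) :
    ∫⁻ x in Set.Ioo x₁ (x₁+ρ), ENNReal.ofReal (-Real.log (u x t)) = ⊤ := by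
  obtain ⟨x₀, hx₀, hmin⟩ := isCompact_Icc.exists_isMinOn
    (Set.nonempty_Icc.2 (show x₁+ρ ≤ x₁+δ₁ by linarith))
    ((cont_slice_x hu ⟨le_of_lt ht.1, ht.2⟩).mono
      (fun x hx => ⟨le_of_lt (lt_of_lt_of_le hx₁.1 (by linarith [hx.1])),
        le_of_lt (lt_of_le_of_lt hx.2 hδ₁b)⟩))
  have hm : 0 < u x₀ t :=
    upos hab hx₁ hu ⟨by linarith [hx₀.1], by linarith [hx₀.2]⟩ ht
  apply lint_split_top htop (C := ENNReal.ofReal (-Real.log (u x₀ t))) ENNReal.ofReal_ne_top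
  intro x hx
  apply ENNReal.ofReal_le_ofReal
  have hle : u x₀ t ≤ u x t := hmin ⟨hx.1, le_of_lt hx.2⟩
  have := Real.log_le_log hm hle
  linarith

/-- lower slope bound via the mean value theorem -/
lemma slope_lower (hab : a < b) (hx₁ : x₁ ∈ Set.Ioo a b) (hu : IsClassicalSol a b T {x₁} u₀ u)
    {t c r : ℝ} (ht : t ∈ Set.Ioc 0 T) (hc : x₁ < c) (hcb : c ≤ b)
    (hr : ∀ y ∈ Set.Ioo x₁ c, r ≤ pdx u y t) {x : ℝ} (hx : x ∈ Set.Ioo x₁ c) :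
    r * (x - x₁) ≤ u x t := by
  have hstep : ∀ y ∈ Set.Ioo x₁ x, u y t + r * (x - y) ≤ u x t := by
    intro y hy
    have hyx : y < x := hy.2
    have hsub : Set.Icc y x ⊆ Set.Icc a b := fun z hz =>
      ⟨le_of_lt (lt_trans hx₁.1 (lt_of_lt_of_le hy.1 hz.1)),
        le_trans hz.2 (le_trans (le_of_lt hx.2) hcb)⟩
    obtain ⟨ξ, hξ, hslope⟩ := exists_hasDerivAt_eq_slope (fun z => u z t) (fun z => pdx u z t)
      hyx ((cont_slice_x hu ⟨le_of_lt ht.1, ht.2⟩).mono hsub)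
      (fun z hz => (hu.diff_x (z, t) (mem_QTN
        ⟨lt_trans hx₁.1 (lt_trans hy.1 hz.1),
          lt_of_lt_of_le (lt_trans hz.2 hx.2) (le_trans (le_refl c) (le_of_eq rfl)) |>.trans_le hcb⟩
        (ne_of_gt (lt_trans hy.1 hz.1)) ht)).hasDerivAt)
    have hξI : ξ ∈ Set.Ioo x₁ c := ⟨lt_trans hy.1 hξ.1, lt_trans hξ.2 hx.2⟩
    have := hr ξ hξI
    rw [hslope] at this
    rw [le_div_iff₀ (by linarith)] at this
    linarith
  -- pass to the limit y → x₁⁺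
  set yk : ℕ → ℝ := fun k => x₁ + (x - x₁)/((k:ℝ)+2) with hyk
  have hxx₁ : 0 < x - x₁ := by linarith [hx.1]
  have hykI : ∀ k, yk k ∈ Set.Ioo x₁ x := by
    intro k
    constructor
    · have : 0 < (x - x₁)/((k:ℝ)+2) := div_pos hxx₁ (by positivity)
      rw [hyk]; simp only; linarith
    · have h2 : (x - x₁)/((k:ℝ)+2) < x - x₁ := by
        rw [div_lt_iff₀ (by positivity)]
        nlinarith [Nat.cast_nonneg (α := ℝ) k]
      rw [hyk]; simp only; linarith
  have hlim : Tendsto (fun k => u (yk k) t + r * (x - yk k)) atTop (𝓝 (0 + r * (x - x₁))) := by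
    have h1 : Tendsto yk atTop (𝓝 x₁) := by
      have : Tendsto (fun k : ℕ => x₁ + (x - x₁)/((k:ℝ)+2)) atTop (𝓝 (x₁ + 0)) :=
        tendsto_const_nhds.add (tendsto_c_div _)
      simpa using this
    have h2 : Tendsto (fun k => u (yk k) t) atTop (𝓝 0) := by
      have hcw : ContinuousWithinAt (fun z => u z t) (Set.Icc a b) x₁ :=
        (cont_slice_x hu ⟨le_of_lt ht.1, ht.2⟩).continuousWithinAt
          ⟨le_of_lt hx₁.1, le_of_lt hx₁.2⟩
      have htd : Tendsto yk atTop (𝓝[Set.Icc a b] x₁) := by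
        rw [tendsto_nhdsWithin_iff]
        refine ⟨h1, Filter.Eventually.of_forall (fun k => ?_)⟩
        have := hykI k
        exact ⟨le_of_lt (lt_trans hx₁.1 this.1),
          le_trans (le_of_lt this.2) (le_trans (le_of_lt hx.2) hcb)⟩
      have := hcw.tendsto.comp htd
      rwa [u_x₁_zero hx₁ hu ⟨le_of_lt ht.1, ht.2⟩] at this
    have h3 : Tendsto (fun k => r * (x - yk k)) atTop (𝓝 (r * (x - x₁))) := by
      apply Tendsto.const_mul
      exact tendsto_const_nhds.sub h1
    exact h2.add h3
  have := le_of_tendsto hlim (Filter.Eventually.of_forall (fun k => hstep (yk k) (hykI k)))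
  linarith

/-- upper slope bound via the mean value theorem -/
lemma slope_upper (hab : a < b) (hx₁ : x₁ ∈ Set.Ioo a b) (hu : IsClassicalSol a b T {x₁} u₀ u)
    {t c r : ℝ} (ht : t ∈ Set.Ioc 0 T) (hc : x₁ < c) (hcb : c ≤ b)
    (hr : ∀ y ∈ Set.Ioo x₁ c, pdx u y t ≤ r) {x : ℝ} (hx : x ∈ Set.Ioo x₁ c) :
    u x t ≤ r * (x - x₁) := by
  have hstep : ∀ y ∈ Set.Ioo x₁ x, u x t ≤ u y t + r * (x - y) := by
    intro y hy
    have hyx : y < x := hy.2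
    have hsub : Set.Icc y x ⊆ Set.Icc a b := fun z hz =>
      ⟨le_of_lt (lt_trans hx₁.1 (lt_of_lt_of_le hy.1 hz.1)),
        le_trans hz.2 (le_trans (le_of_lt hx.2) hcb)⟩
    obtain ⟨ξ, hξ, hslope⟩ := exists_hasDerivAt_eq_slope (fun z => u z t) (fun z => pdx u z t)
      hyx ((cont_slice_x hu ⟨le_of_lt ht.1, ht.2⟩).mono hsub)
      (fun z hz => (hu.diff_x (z, t) (mem_QTN
        ⟨lt_trans hx₁.1 (lt_trans hy.1 hz.1),
          lt_of_lt_of_le (lt_trans hz.2 hx.2) hcb⟩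
        (ne_of_gt (lt_trans hy.1 hz.1)) ht)).hasDerivAt)
    have hξI : ξ ∈ Set.Ioo x₁ c := ⟨lt_trans hy.1 hξ.1, lt_trans hξ.2 hx.2⟩
    have := hr ξ hξI
    rw [hslope, div_le_iff₀ (by linarith)] at this
    linarith
  set yk : ℕ → ℝ := fun k => x₁ + (x - x₁)/((k:ℝ)+2) with hyk
  have hxx₁ : 0 < x - x₁ := by linarith [hx.1]
  have hykI : ∀ k, yk k ∈ Set.Ioo x₁ x := by
    intro k
    constructor
    · have : 0 < (x - x₁)/((k:ℝ)+2) := div_pos hxx₁ (by positivity)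
      rw [hyk]; simp only; linarith
    · have h2 : (x - x₁)/((k:ℝ)+2) < x - x₁ := by
        rw [div_lt_iff₀ (by positivity)]
        nlinarith [Nat.cast_nonneg (α := ℝ) k]
      rw [hyk]; simp only; linarith
  have hlim : Tendsto (fun k => u (yk k) t + r * (x - yk k)) atTop (𝓝 (0 + r * (x - x₁))) := by
    have h1 : Tendsto yk atTop (𝓝 x₁) := by
      have : Tendsto (fun k : ℕ => x₁ + (x - x₁)/((k:ℝ)+2)) atTop (𝓝 (x₁ + 0)) :=
        tendsto_const_nhds.add (tendsto_c_div _)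
      simpa using this
    have h2 : Tendsto (fun k => u (yk k) t) atTop (𝓝 0) := by
      have hcw : ContinuousWithinAt (fun z => u z t) (Set.Icc a b) x₁ :=
        (cont_slice_x hu ⟨le_of_lt ht.1, ht.2⟩).continuousWithinAt
          ⟨le_of_lt hx₁.1, le_of_lt hx₁.2⟩
      have htd : Tendsto yk atTop (𝓝[Set.Icc a b] x₁) := by
        rw [tendsto_nhdsWithin_iff]
        refine ⟨h1, Filter.Eventually.of_forall (fun k => ?_)⟩
        have := hykI k
        exact ⟨le_of_lt (lt_trans hx₁.1 this.1),
          le_trans (le_of_lt this.2) (le_trans (le_of_lt hx.2) hcb)⟩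
      have := hcw.tendsto.comp htd
      rwa [u_x₁_zero hx₁ hu ⟨le_of_lt ht.1, ht.2⟩] at this
    have h3 : Tendsto (fun k => r * (x - yk k)) atTop (𝓝 (r * (x - x₁))) := by
      apply Tendsto.const_mul
      exact tendsto_const_nhds.sub h1
    exact h2.add h3
  have := ge_of_tendsto hlim (Filter.Eventually.of_forall (fun k => hstep (yk k) (hykI k)))
  linarith

end Slope


set_option maxHeartbeats 1000000 in
/-- Remark 6.2 (infinite waiting time): if `u₀` is strictly increasing with unique zero `x₁`
and `log u₀ ∉ L¹(x₁,b)`, then `∫_{x₁}^b log u(x,t) ψ(x) dx = -∞` for all `t ∈ (0,T]` and all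
admissible `ψ`; consequently `τ₁⁺ = ∞`, i.e. `u_x(x₁⁺,t) = 0` for all `t ∈ (0,T]`. -/
theorem stmt12 (a b T x₁ : ℝ) (hab : a < b) (hT : 0 < T)
    (u₀ : ℝ → ℝ) (h₀c : ContinuousOn u₀ (Set.Icc a b))
    (h₀m : StrictMonoOn u₀ (Set.Icc a b))
    (h₀a : u₀ a = -1) (h₀b : u₀ b = 1)
    (hx₁ : x₁ ∈ Set.Ioo a b) (h₀z : u₀ x₁ = 0)
    (hlog : ∫⁻ x in Set.Ioo x₁ b, ENNReal.ofReal |Real.log (u₀ x)| = ⊤)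
    (u : ℝ → ℝ → ℝ) (hu : IsClassicalSol a b T {x₁} u₀ u)
    (uxp : ℝ → ℝ)
    (huxp : ∀ t ∈ Set.Ioc (0:ℝ) T, Tendsto (fun y => pdx u y t) (𝓝[>] x₁) (𝓝 (uxp t))) :
    (∀ t ∈ Set.Ioc (0:ℝ) T, ∀ ψ : ℝ → ℝ, ContDiff ℝ 1 ψ → ψ x₁ = 1 → ψ b = 0 →
      (∀ x ∈ Set.Icc x₁ b, deriv ψ x ≤ 0) →
      ∫⁻ x in Set.Ioo x₁ b, ENNReal.ofReal (-(Real.log (u x t) * ψ x)) = ⊤) ∧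
    ∀ t ∈ Set.Ioc (0:ℝ) T, uxp t = 0 := by
  obtain ⟨δ₁, hδ₁pos, hδ₁b, hsmall, hcore⟩ := core hab hT h₀m h₀b hx₁ h₀z hlog hu
  constructor
  · -- part 1
    intro t ht ψ hψ hψ1 hψb hψ'
    have hψc : Continuous ψ := hψ.continuous
    have hcont : ContinuousAt ψ x₁ := hψc.continuousAt
    rw [Metric.continuousAt_iff] at hcont
    obtain ⟨ρ₀, hρ₀, hρ₀'⟩ := hcont (1/2) (by norm_num)
    set ρ := min (ρ₀/2) (δ₁/2) with hρdef
    have hρpos : 0 < ρ := lt_min (by linarith) (by linarith)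
    have hρδ : ρ ≤ δ₁ := le_trans (min_le_right _ _) (by linarith)
    have hψhalf : ∀ x ∈ Set.Ioo x₁ (x₁+ρ), 1/2 ≤ ψ x := by
      intro x hx
      have hd : dist x x₁ < ρ₀ := by
        rw [Real.dist_eq, abs_of_nonneg (by linarith [hx.1])]
        have h2 := min_le_left (ρ₀/2) (δ₁/2)
        linarith [hx.2]
      have h3 := hρ₀' hd
      rw [Real.dist_eq, hψ1] at h3
      have h4 := abs_lt.1 h3
      linarith [h4.1]
    have h2 := localize hab hx₁ hu ht hδ₁b hρpos hρδ (hcore t ht)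
    have hptw : ∀ x ∈ Set.Ioo x₁ (x₁+ρ), ENNReal.ofReal (-Real.log (u x t))
        ≤ ENNReal.ofReal 2 * ENNReal.ofReal (-(Real.log (u x t) * ψ x)) := by
      intro x hx
      have hxIoc : x ∈ Set.Ioc x₁ (x₁+δ₁) := ⟨hx.1, by linarith [hx.2]⟩
      have hpos : 0 < u x t := upos hab hx₁ hu ⟨hx.1, by linarith [hxIoc.2]⟩ ht
      have h0 : 0 ≤ -Real.log (u x t) := by
        rw [neg_nonneg]
        exact Real.log_nonpos (le_of_lt hpos)
          (le_of_lt (lt_of_lt_of_le (hsmall x hxIoc t ⟨le_of_lt ht.1, ht.2⟩) (by norm_num)))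
      rw [← ENNReal.ofReal_mul (by norm_num)]
      apply ENNReal.ofReal_le_ofReal
      have := hψhalf x hx
      nlinarith
    have h3 : (⊤:ℝ≥0∞) ≤ ENNReal.ofReal 2
        * ∫⁻ x in Set.Ioo x₁ (x₁+ρ), ENNReal.ofReal (-(Real.log (u x t) * ψ x)) := by
      rw [← MeasureTheory.lintegral_const_mul' (ENNReal.ofReal 2) _ ENNReal.ofReal_ne_top]
      calc (⊤:ℝ≥0∞) = ∫⁻ x in Set.Ioo x₁ (x₁+ρ), ENNReal.ofReal (-Real.log (u x t)) := h2.symm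
      _ ≤ _ := MeasureTheory.setLIntegral_mono' measurableSet_Ioo hptw
    have h4 : ∫⁻ x in Set.Ioo x₁ (x₁+ρ), ENNReal.ofReal (-(Real.log (u x t) * ψ x)) = ⊤ := by
      by_contra hne
      exact (ENNReal.mul_ne_top ENNReal.ofReal_ne_top hne) (top_le_iff.1 h3)
    rw [eq_top_iff, ← h4]
    apply lintegral_mono_set
    intro x hx
    exact ⟨hx.1, by linarith [hx.2]⟩
  · -- part 2
    intro t ht
    by_contra hL0
    rcases lt_or_gt_of_ne hL0 with hneg | hpos
    · have hev : ∀ᶠ y in 𝓝[>] x₁, pdx u y t < uxp t / 2 :=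
        (huxp t ht).eventually_lt_const (by linarith)
      obtain ⟨w, hw, hsub⟩ := mem_nhdsGT_iff_exists_Ioo_subset.1 hev
      set c := min w (x₁ + δ₁) with hcdef
      have hc : x₁ < c := lt_min hw (by linarith)
      have hcb : c ≤ b := le_trans (min_le_right _ _) (le_of_lt hδ₁b)
      set x := (x₁ + c)/2 with hxdef
      have hxI : x ∈ Set.Ioo x₁ c := ⟨by rw [hxdef]; linarith, by rw [hxdef]; linarith⟩
      have hub := slope_upper hab hx₁ hu ht hc hcb
        (fun y hy => le_of_lt (hsub ⟨hy.1, lt_of_lt_of_le hy.2 (min_le_left _ _)⟩)) hxI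
      have hpos' : 0 < u x t := upos hab hx₁ hu ⟨hxI.1, le_trans (le_of_lt hxI.2) hcb⟩ ht
      nlinarith [hxI.1]
    · have hev : ∀ᶠ y in 𝓝[>] x₁, uxp t / 2 < pdx u y t :=
        (huxp t ht).eventually_const_lt (by linarith)
      obtain ⟨w, hw, hsub⟩ := mem_nhdsGT_iff_exists_Ioo_subset.1 hev
      set c := min w (x₁ + δ₁) with hcdef
      have hc : x₁ < c := lt_min hw (by linarith)
      have hcb : c ≤ b := le_trans (min_le_right _ _) (le_of_lt hδ₁b)
      set r := uxp t / 2 with hrdef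
      have hrpos : 0 < r := by rw [hrdef]; linarith
      have hlb : ∀ x ∈ Set.Ioo x₁ c, r * (x - x₁) ≤ u x t :=
        fun x hx => slope_lower hab hx₁ hu ht hc hcb
          (fun y hy => le_of_lt (hsub ⟨hy.1, lt_of_lt_of_le hy.2 (min_le_left _ _)⟩)) hx
      have htop : ∫⁻ x in Set.Ioo x₁ c, ENNReal.ofReal (-Real.log (u x t)) = ⊤ := by
        have h5 := localize hab hx₁ hu ht hδ₁b (show 0 < c - x₁ by linarith)
          (show c - x₁ ≤ δ₁ by
            have := min_le_right w (x₁+δ₁); rw [hcdef]; linarith) (hcore t ht)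
        rwa [show x₁ + (c - x₁) = c by ring] at h5
      have hbd : ∀ x ∈ Set.Ioo x₁ c, ENNReal.ofReal (-Real.log (u x t))
          ≤ ENNReal.ofReal (-Real.log r) + ENNReal.ofReal (2 * (x - x₁) ^ (-(1/2) : ℝ)) := by
        intro x hx
        have hxx : 0 < x - x₁ := by linarith [hx.1]
        have h1 : 0 < r * (x - x₁) := by positivity
        have h2 : -Real.log (u x t) ≤ -Real.log (r * (x - x₁)) := by
          have := Real.log_le_log h1 (hlb x hx)
          linarith
        have h3 : -Real.log (r * (x - x₁)) = (-Real.log r) + (-Real.log (x - x₁)) := by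
          rw [Real.log_mul (ne_of_gt hrpos) (ne_of_gt hxx)]; ring
        have h4 : -Real.log (x - x₁) ≤ 2 * (x - x₁) ^ (-(1/2) : ℝ) := neg_log_le_rpow hxx
        calc ENNReal.ofReal (-Real.log (u x t))
            ≤ ENNReal.ofReal ((-Real.log r) + 2 * (x - x₁) ^ (-(1/2) : ℝ)) := by
              apply ENNReal.ofReal_le_ofReal
              rw [h3] at h2
              linarith
        _ ≤ _ := ENNReal.ofReal_add_le
      have hfin : ∫⁻ x in Set.Ioo x₁ c, (ENNReal.ofReal (-Real.log r)
          + ENNReal.ofReal (2 * (x - x₁) ^ (-(1/2) : ℝ))) ≠ ⊤ := by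
        rw [MeasureTheory.lintegral_add_left measurable_const]
        apply ENNReal.add_ne_top.2
        constructor
        · rw [MeasureTheory.setLIntegral_const]
          exact ENNReal.mul_ne_top ENNReal.ofReal_ne_top
            (by rw [Real.volume_Ioo]; exact ENNReal.ofReal_ne_top)
        · have hii : IntervalIntegrable (fun z : ℝ => z ^ (-(1/2) : ℝ))
              MeasureTheory.volume 0 (c - x₁) :=
            intervalIntegral.intervalIntegrable_rpow' (by norm_num)
          have hii2 := hii.comp_sub_right x₁
          rw [zero_add, sub_add_cancel] at hii2
          have hio : MeasureTheory.IntegrableOn (fun x : ℝ => (x - x₁) ^ (-(1/2) : ℝ))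
              (Set.Ioc x₁ c) :=
            (intervalIntegrable_iff_integrableOn_Ioc_of_le (by linarith)).1 hii2
          have hio2 : MeasureTheory.IntegrableOn (fun x : ℝ => 2 * (x - x₁) ^ (-(1/2) : ℝ))
              (Set.Ioo x₁ c) :=
            MeasureTheory.IntegrableOn.mono_set (hio.const_mul 2) Set.Ioo_subset_Ioc_self
          have hnn2 : 0 ≤ᵐ[MeasureTheory.volume.restrict (Set.Ioo x₁ c)]
              (fun x : ℝ => 2 * (x - x₁) ^ (-(1/2) : ℝ)) := by
            refine (MeasureTheory.ae_restrict_iff' measurableSet_Ioo).2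
              (Filter.Eventually.of_forall ?_)
            intro x hx
            have : 0 < x - x₁ := by linarith [hx.1]
            positivity
          rw [← MeasureTheory.ofReal_integral_eq_lintegral_ofReal hio2 hnn2]
          exact ENNReal.ofReal_ne_top
      have hcontr := MeasureTheory.setLIntegral_mono' (μ := MeasureTheory.volume)
        measurableSet_Ioo hbd
      rw [htop] at hcontr
      exact hfin (top_le_iff.1 hcontr)
end

section
/- For all ε > 0 and δ > 0 one has the identity ∫₀^δ dw/(ε + Φ_ε²(w)) = 2 log( ( Φ_ε(δ) + √(ε + Φ_ε²(δ)) ) / √ε ). -/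
open Set Filter Topology MeasureTheory

/-- `U_ε(φ) = 2∫₀^φ √(ε + s²) ds` (equation (1.3)); its inverse is `Φ_ε`. -/
noncomputable def Ureg (ε φ : ℝ) : ℝ := 2 * ∫ s in (0:ℝ)..φ, Real.sqrt (ε + s ^ 2)

lemma sqrt_cont (ε : ℝ) : Continuous fun s : ℝ => Real.sqrt (ε + s ^ 2) :=
  (continuous_const.add (continuous_pow 2)).sqrt

lemma Ureg_hasDerivAt (ε : ℝ) (x : ℝ) :
    HasDerivAt (Ureg ε) (2 * Real.sqrt (ε + x ^ 2)) x := by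
  have h : HasDerivAt (fun φ => ∫ s in (0:ℝ)..φ, Real.sqrt (ε + s ^ 2))
      (Real.sqrt (ε + x ^ 2)) x :=
    intervalIntegral.integral_hasDerivAt_right
      ((sqrt_cont ε).intervalIntegrable _ _)
      ((sqrt_cont ε).stronglyMeasurableAtFilter _ _)
      (sqrt_cont ε).continuousAt
  exact h.const_mul 2

lemma Ureg_strictMono (ε : ℝ) (hε : 0 < ε) : StrictMono (Ureg ε) := by
  apply strictMono_of_deriv_pos
  intro x
  rw [(Ureg_hasDerivAt ε x).deriv]
  have : 0 < ε + x ^ 2 := by positivity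
  positivity

lemma Ureg_zero (ε : ℝ) : Ureg ε 0 = 0 := by simp [Ureg]

/-- Identity (4.20): for all `ε, δ > 0`,
`∫₀^δ dw/(ε + Φ_ε²(w)) = 2 log((Φ_ε(δ) + √(ε + Φ_ε²(δ)))/√ε)`. -/
theorem stmt18 (ε δ : ℝ) (hε : 0 < ε) (hδ : 0 < δ) (Φ : ℝ → ℝ)
    (hΦl : Function.LeftInverse Φ (Ureg ε))
    (hΦr : Function.RightInverse Φ (Ureg ε)) :
    ∫ w in (0:ℝ)..δ, (ε + Φ w ^ 2)⁻¹
      = 2 * Real.log ((Φ δ + Real.sqrt (ε + Φ δ ^ 2)) / Real.sqrt ε) := by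
  have hmono := Ureg_strictMono ε hε
  have hsurj : Function.Surjective (Ureg ε) := hΦr.surjective
  set e := StrictMono.orderIsoOfSurjective _ hmono hsurj with he
  have hΦe : Φ = fun y => e.symm y := by
    funext y
    apply hmono.injective
    have : Ureg ε (e.symm y) = y := e.apply_symm_apply y
    rw [hΦr y, this]
  have hΦcont : Continuous Φ := by
    rw [hΦe]
    exact (OrderIso.toHomeomorph e.symm).continuous
  have hgpos : ∀ w : ℝ, 0 < ε + Φ w ^ 2 := fun w => by positivity
  have hgcont : Continuous fun w => (ε + Φ w ^ 2)⁻¹ :=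
    (continuous_const.add ((hΦcont.pow 2))).inv₀ fun w => (hgpos w).ne'
  set b := Φ δ with hb
  -- substitution w = Ureg ε φ
  have hsub := intervalIntegral.integral_comp_smul_deriv
    (f := Ureg ε) (f' := fun x => 2 * Real.sqrt (ε + x ^ 2))
    (g := fun w => (ε + Φ w ^ 2)⁻¹) (a := 0) (b := b)
    (fun x _ => Ureg_hasDerivAt ε x)
    ((continuous_const.mul (sqrt_cont ε)).continuousOn) hgcont
  simp only [Function.comp_apply] at hsub
  rw [Ureg_zero, hΦr δ] at hsub
  have hεs : (0:ℝ) < Real.sqrt ε := Real.sqrt_pos.2 hε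
  have key : ∀ x : ℝ, (2 * Real.sqrt (ε + x ^ 2)) • (ε + Φ (Ureg ε x) ^ 2)⁻¹
      = 2 * (ε + x ^ 2)⁻¹ * Real.sqrt (ε + x ^ 2) := by
    intro x
    rw [hΦl x]
    have : (0:ℝ) < ε + x ^ 2 := by positivity
    simp [smul_eq_mul]
    ring
  have hint : (∫ x in (0:ℝ)..b, (2 * Real.sqrt (ε + x ^ 2)) • (ε + Φ (Ureg ε x) ^ 2)⁻¹)
      = ∫ x in (0:ℝ)..b, 2 * (Real.sqrt (ε + x ^ 2))⁻¹ := by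
    apply intervalIntegral.integral_congr
    intro x _
    show (2 * Real.sqrt (ε + x ^ 2)) • (ε + Φ (Ureg ε x) ^ 2)⁻¹
        = 2 * (Real.sqrt (ε + x ^ 2))⁻¹
    rw [key x]
    have hpos : (0:ℝ) < ε + x ^ 2 := by positivity
    have hs : Real.sqrt (ε + x ^ 2) ≠ 0 := by positivity
    field_simp
    rw [Real.sq_sqrt hpos.le]
  -- antiderivative 2 * arsinh (x / √ε)
  have hF : ∀ x : ℝ, HasDerivAt (fun x => 2 * Real.arsinh (x / Real.sqrt ε))
      (2 * (Real.sqrt (ε + x ^ 2))⁻¹) x := by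
    intro x
    have h1 : HasDerivAt (fun x : ℝ => x / Real.sqrt ε) (Real.sqrt ε)⁻¹ x := by
      simpa using (hasDerivAt_id x).div_const (Real.sqrt ε)
    have h2 := (Real.hasDerivAt_arsinh (x / Real.sqrt ε)).comp x h1
    have heq : Real.sqrt (1 + (x / Real.sqrt ε) ^ 2) * Real.sqrt ε
        = Real.sqrt (ε + x ^ 2) := by
      rw [← Real.sqrt_mul_self hεs.le, ← Real.sqrt_mul (by positivity)]
      congr 1
      field_simp [Real.sq_sqrt hε.le, Real.sqrt_mul_self hεs.le]
      rw [Real.sqrt_sq hεs.le, Real.sq_sqrt hε.le]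
    have h3 := h2.const_mul 2
    refine h3.congr_deriv ?_
    rw [← heq, mul_inv]
  have hcont2 : Continuous fun x : ℝ => 2 * (Real.sqrt (ε + x ^ 2))⁻¹ := by
    apply continuous_const.mul
    apply (sqrt_cont ε).inv₀
    intro x
    have : (0:ℝ) < ε + x ^ 2 := by positivity
    positivity
  have hcalc : (∫ x in (0:ℝ)..b, 2 * (Real.sqrt (ε + x ^ 2))⁻¹)
      = 2 * Real.arsinh (b / Real.sqrt ε) - 2 * Real.arsinh (0 / Real.sqrt ε) :=
    intervalIntegral.integral_eq_sub_of_hasDerivAt (fun x _ => hF x)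
      (hcont2.intervalIntegrable _ _)
  rw [← hsub, hint, hcalc]
  rw [Real.arsinh]
  simp only [zero_div, Real.arsinh_zero, mul_zero, sub_zero]
  congr 1
  congr 1
  have : Real.sqrt (1 + (b / Real.sqrt ε) ^ 2) = Real.sqrt (ε + b ^ 2) / Real.sqrt ε := by
    rw [eq_div_iff hεs.ne', ← Real.sqrt_mul (by positivity)]
    congr 1
    field_simp [Real.sq_sqrt hε.le, Real.sqrt_mul_self hεs.le]
    rw [Real.sq_sqrt hε.le]
    ring
  rw [this]
  field_simp
end
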